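/- arXiv:0804.2032 — 4 statements merged into one kernel-verified Lean document; each statement's English description precedes it below -/
import Mathlib

section
/- Let T be an out-branching of a digraph D, and let (u,v) ∈ A(D)\A(T) with v not the root of T. The digraph T' obtained by the 1-change for (u,v) has strictly more vertices of out-degree 0 than T if and only if u ∉ Leaf(T) and v ∉ BrSucc(T). -/
/-- A (finite, loopless) directed graph, given by its vertex set and arc set. -/
structure DirGraph (V : Type) where
  verts : Set V
  arcs : Set (V × V)

namespace DirGraph

variable {V : Type}

/-- Every arc joins two distinct vertices of the digraph. -/
def WellFormed (D : DirGraph V) : Prop :=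
  ∀ a ∈ D.arcs, a.1 ∈ D.verts ∧ a.2 ∈ D.verts ∧ a.1 ≠ a.2

/-- `T` is a subgraph of `D`. -/
def IsSubgraph (T D : DirGraph V) : Prop :=
  T.verts ⊆ D.verts ∧ T.arcs ⊆ D.arcs

/-- The in-degree of a vertex. -/
noncomputable def inDeg (D : DirGraph V) (v : V) : ℕ :=
  {a ∈ D.arcs | a.2 = v}.ncard

/-- The out-degree of a vertex. -/
noncomputable def outDeg (D : DirGraph V) (v : V) : ℕ :=
  {a ∈ D.arcs | a.1 = v}.ncard

/-- A dipath in `D`: a nonempty list of distinct vertices of `D`,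
consecutive ones being joined by arcs of `D`. -/
def IsDipath (D : DirGraph V) (l : List V) : Prop :=
  l ≠ [] ∧ l.Nodup ∧ (∀ v ∈ l, v ∈ D.verts) ∧
    l.Chain' (fun u v => (u, v) ∈ D.arcs)

/-- `v` is reachable from `u` by a dipath of `D` (in particular,
every vertex of `D` reaches itself). -/
def Reaches (D : DirGraph V) (u v : V) : Prop :=
  ∃ l : List V, D.IsDipath l ∧ l.head? = some u ∧ l.getLast? = some v

/-- `R_D(u)`: the set of vertices reachable from `u` in `D`. -/
def reachSet (D : DirGraph V) (u : V) : Set V := {v | D.Reaches u v}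

/-- `T` is an out-tree with root `r`: `r` is the only vertex of in-degree 0,
every other vertex has in-degree 1, and the underlying graph is a tree
(equivalently, under the degree conditions, every vertex is reachable from `r`). -/
structure IsOutTree (T : DirGraph V) (r : V) : Prop where
  arcs_mem : ∀ a ∈ T.arcs, a.1 ∈ T.verts ∧ a.2 ∈ T.verts
  root_mem : r ∈ T.verts
  root_indeg : T.inDeg r = 0
  indeg_one : ∀ v ∈ T.verts, v ≠ r → T.inDeg v = 1
  reach_root : ∀ v ∈ T.verts, T.Reaches r v

/-- `T` is an out-tree of the digraph `D`, with root `r`. -/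
def IsOutTreeOf (T D : DirGraph V) (r : V) : Prop :=
  T.IsOutTree r ∧ T.IsSubgraph D

/-- `T` is an out-branching (spanning out-tree) of `D`, with root `r`. -/
def IsOutBranching (T D : DirGraph V) (r : V) : Prop :=
  T.IsOutTreeOf D r ∧ T.verts = D.verts

/-- `Leaf(T)`: the vertices of out-degree 0. -/
def leaves (T : DirGraph V) : Set V := {v ∈ T.verts | T.outDeg v = 0}

/-- `Branch(T)`: the vertices of out-degree at least 2. -/
def branchVerts (T : DirGraph V) : Set V := {v ∈ T.verts | 2 ≤ T.outDeg v}

/-- `BrSucc(T)`: the vertices whose in-neighbor in `T` is a branch vertex. -/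
def brSucc (T : DirGraph V) : Set V := {v | ∃ u, (u, v) ∈ T.arcs ∧ 2 ≤ T.outDeg u}

/-- `Head(B)`: the set of heads of the arcs in `B`. -/
def heads (B : Set (V × V)) : Set V := Prod.snd '' B

/-- `Back_D^T(z) = {(u,v) ∈ A(D) : v ≺_T z ⪯_T u}`. -/
def backArcs (D T : DirGraph V) (z : V) : Set (V × V) :=
  {a ∈ D.arcs | (T.Reaches a.2 z ∧ a.2 ≠ z) ∧ T.Reaches z a.1}

/-- The 1-change for `(u,v)`: add the arc `(u,v)` and delete the arc of `T`
with head `v`. -/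
def oneChange (T : DirGraph V) (u v : V) : DirGraph V :=
  ⟨T.verts, {a ∈ T.arcs | a.2 ≠ v} ∪ {(u, v)}⟩

/-- `ℓ(D)`: the maximum number of leaves over all out-trees of `D`. -/
noncomputable def ell (D : DirGraph V) : ℕ :=
  sSup {k | ∃ (T : DirGraph V) (r : V), IsOutTreeOf T D r ∧ (leaves T).ncard = k}

/-- `ℓ_s(D)`: the maximum number of leaves over all out-branchings of `D`. -/
noncomputable def ellS (D : DirGraph V) : ℕ :=
  sSup {k | ∃ (T : DirGraph V) (r : V), IsOutBranching T D r ∧ (leaves T).ncard = k}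

/-- An arc is useless if no out-branching of `D` contains it. -/
def Useless (D : DirGraph V) (a : V × V) : Prop :=
  ∀ (T : DirGraph V) (r : V), IsOutBranching T D r → a ∉ T.arcs

/-- `T` is a 1-optimal out-branching of `D`: no 1-change for an arc of
`A(D) \ A(T)` results in an out-branching with more leaves. -/
def IsOneOptimal (T D : DirGraph V) (r : V) : Prop :=
  IsOutBranching T D r ∧
    ∀ u v : V, (u, v) ∈ D.arcs → (u, v) ∉ T.arcs → v ≠ r →
      ∀ r' : V, IsOutBranching (oneChange T u v) D r' →
        (leaves (oneChange T u v)).ncard ≤ (leaves T).ncard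

/-- `(X, U)` is a tree decomposition of the digraph `D`: `U` is a tree,
every vertex of `D` is in some bag, both endpoints of every arc are in a
common bag, and for every vertex the set of nodes whose bags contain it
induces a subtree (a connected subgraph) of `U`. -/
structure IsTreeDecomp {ι : Type} (D : DirGraph V) (U : SimpleGraph ι) (X : ι → Set V) :
    Prop where
  tree : U.IsTree
  mem_bag : ∀ v ∈ D.verts, ∃ i, v ∈ X i
  arc_bag : ∀ a ∈ D.arcs, ∃ i, a.1 ∈ X i ∧ a.2 ∈ X i
  bag_connected : ∀ (v : V) (i j : ι), v ∈ X i → v ∈ X j →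
    Relation.ReflTransGen (fun x y => U.Adj x y ∧ v ∈ X x ∧ v ∈ X y) i j

/-- The underlying undirected graph of `T`, on the vertex set of `T`. -/
def underlying (T : DirGraph V) : SimpleGraph {v // v ∈ T.verts} :=
  SimpleGraph.fromRel fun a b => ((a : V), (b : V)) ∈ T.arcs

/-- The bag `X_v = {u, v} ∪ BrSucc(T) ∪ Leaf(T) ∪ Head(Back_D^T(v))`,
where `u` is the in-neighbor of `v` in `T` (omitted when `v` is the root). -/
def bag (D T : DirGraph V) (v : V) : Set V :=
  {u | (u, v) ∈ T.arcs} ∪ {v} ∪ brSucc T ∪ leaves T ∪ heads (backArcs D T v)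

/-- The set of arcs of a dipath given as a list of vertices. -/
def listArcs (l : List V) : Set (V × V) := {a | a ∈ l.zip l.tail}

end DirGraph

namespace DirGraph

theorem oneChange_more_leaves_iff {V : Type} [Fintype V]
    (D T : DirGraph V) (r u v : V) (hD : D.WellFormed)
    (hT : IsOutBranching T D r)
    (ha : (u, v) ∈ D.arcs) (haT : (u, v) ∉ T.arcs) (hv : v ≠ r) :
    (leaves T).ncard < (leaves (oneChange T u v)).ncard ↔
      u ∉ leaves T ∧ v ∉ brSucc T := by
  obtain ⟨⟨hTtree, hTsubV, hTsubA⟩, hverts⟩ := hT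
  have hvV : v ∈ T.verts := by rw [hverts]; exact (hD _ ha).2.1
  have huV : u ∈ T.verts := by rw [hverts]; exact (hD _ ha).1
  -- the unique in-neighbor w of v in T
  have hin : T.inDeg v = 1 := hTtree.indeg_one v hvV hv
  rw [inDeg, Set.ncard_eq_one] at hin
  obtain ⟨a₀, ha₀⟩ := hin
  have hwvA : a₀ ∈ T.arcs ∧ a₀.2 = v := by
    have : a₀ ∈ ({a₀} : Set (V × V)) := rfl
    rw [← ha₀] at this; exact this
  set w := a₀.1 with hwdef
  have ha₀eq : a₀ = (w, v) := by
    obtain ⟨a1, a2⟩ := a₀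
    exact congrArg (Prod.mk a1) hwvA.2
  have hwA : (w, v) ∈ T.arcs := ha₀eq ▸ hwvA.1
  have huniq : ∀ x, (x, v) ∈ T.arcs → x = w := by
    intro x hx
    have h2 : (x, v) ∈ ({a₀} : Set (V × V)) := by
      rw [← ha₀]; exact ⟨hx, rfl⟩
    have h3 : (x, v) = a₀ := h2
    exact congrArg Prod.fst h3
  have hwu : w ≠ u := fun h => haT (h ▸ hwA)
  have hwV : w ∈ T.verts := (hTtree.arcs_mem _ hwA).1
  -- out-degree facts
  have houtu : (oneChange T u v).outDeg u = T.outDeg u + 1 := by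
    have hset : {a ∈ (oneChange T u v).arcs | a.1 = u} =
        insert (u, v) {a ∈ T.arcs | a.1 = u} := by
      ext ⟨a1, a2⟩
      simp only [oneChange, Set.mem_setOf_eq, Set.mem_union, Set.mem_insert_iff,
        Set.mem_singleton_iff, Prod.mk.injEq]
      constructor
      · rintro ⟨h | ⟨rfl, rfl⟩, h1⟩
        · exact Or.inr ⟨h.1, h1⟩
        · exact Or.inl ⟨rfl, rfl⟩
      · rintro (⟨rfl, rfl⟩ | ⟨h, h1⟩)
        · exact ⟨Or.inr ⟨rfl, rfl⟩, rfl⟩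
        · refine ⟨Or.inl ⟨h, ?_⟩, h1⟩
          rintro rfl
          exact hwu ((huniq a1 h).symm.trans h1)
    rw [outDeg, outDeg, hset, Set.ncard_insert_of_notMem (by
      simp only [Set.mem_setOf_eq, not_and]
      intro h _; exact haT h)]
  have houtw : (oneChange T u v).outDeg w + 1 = T.outDeg w := by
    have hset : {a ∈ (oneChange T u v).arcs | a.1 = w} =
        {a ∈ T.arcs | a.1 = w} \ {(w, v)} := by
      ext ⟨a1, a2⟩
      simp only [oneChange, Set.mem_setOf_eq, Set.mem_union, Set.mem_diff,
        Set.mem_singleton_iff, Prod.mk.injEq]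
      constructor
      · rintro ⟨h | ⟨rfl, rfl⟩, h1⟩
        · exact ⟨⟨h.1, h1⟩, by rintro ⟨rfl, rfl⟩; exact h.2 rfl⟩
        · exact absurd h1.symm hwu
      · rintro ⟨⟨h, h1⟩, h2⟩
        refine ⟨Or.inl ⟨h, ?_⟩, h1⟩
        rintro rfl
        exact h2 ⟨huniq a1 h ▸ h1, rfl⟩
    rw [outDeg, outDeg, hset]
    exact Set.ncard_diff_singleton_add_one (⟨hwA, rfl⟩ : (w,v) ∈ {a ∈ T.arcs | a.1 = w})
  have houtx : ∀ x, x ≠ u → x ≠ w → (oneChange T u v).outDeg x = T.outDeg x := by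
    intro x hxu hxw
    have hset : {a ∈ (oneChange T u v).arcs | a.1 = x} = {a ∈ T.arcs | a.1 = x} := by
      ext ⟨a1, a2⟩
      simp only [oneChange, Set.mem_setOf_eq, Set.mem_union, Set.mem_singleton_iff,
        Prod.mk.injEq]
      constructor
      · rintro ⟨h | ⟨rfl, rfl⟩, h1⟩
        · exact ⟨h.1, h1⟩
        · exact absurd h1.symm hxu
      · rintro ⟨h, h1⟩
        refine ⟨Or.inl ⟨h, ?_⟩, h1⟩
        rintro rfl
        exact hxw (h1 ▸ huniq a1 h)
    rw [outDeg, outDeg, hset]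
  have hodw1 : 1 ≤ T.outDeg w := by
    rw [outDeg]
    exact (Set.ncard_pos (Set.toFinite _)).2 ⟨(w, v), hwA, rfl⟩
  have hwnL : w ∉ leaves T := by rintro ⟨_, h⟩; omega
  have hbr : v ∈ brSucc T ↔ 2 ≤ T.outDeg w := by
    constructor
    · rintro ⟨x, hx, h2⟩; rwa [huniq x hx] at h2
    · intro h; exact ⟨w, hwA, h⟩
  -- leaf characterization of the 1-change
  have hmemL : ∀ x, x ∈ leaves (oneChange T u v) ↔
      (x ∈ leaves T ∧ x ≠ u) ∨ (x = w ∧ T.outDeg w = 1) := by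
    intro x
    have hvertseq : (oneChange T u v).verts = T.verts := rfl
    simp only [leaves, Set.mem_setOf_eq, hvertseq]
    rcases eq_or_ne x u with rfl | hxu
    · rw [houtu]
      constructor
      · rintro ⟨_, h⟩; omega
      · rintro (⟨_, h⟩ | ⟨h, _⟩)
        · exact absurd rfl h
        · exact absurd h.symm hwu
    · rcases eq_or_ne x w with rfl | hxw
      · constructor
        · rintro ⟨_, h⟩; right; exact ⟨rfl, by omega⟩
        · rintro (⟨⟨_, h⟩, _⟩ | ⟨_, h⟩)
          · omega
          · exact ⟨hwV, by omega⟩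
      · rw [houtx x hxu hxw]
        constructor
        · rintro ⟨h1, h2⟩; exact Or.inl ⟨⟨h1, h2⟩, hxu⟩
        · rintro (⟨⟨h1, h2⟩, _⟩ | ⟨h, _⟩)
          · exact ⟨h1, h2⟩
          · exact absurd h hxw
  by_cases huL : u ∈ leaves T
  · -- u is a leaf of T: leaf count does not increase
    constructor
    · intro hlt
      exfalso
      rcases le_or_gt 2 (T.outDeg w) with h2 | h2
      · -- leaves T' ⊆ leaves T
        have hsub : leaves (oneChange T u v) ⊆ leaves T := by
          intro x hx
          rcases (hmemL x).1 hx with ⟨h, _⟩ | ⟨_, h⟩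
          · exact h
          · omega
        have := Set.ncard_le_ncard hsub (Set.toFinite _)
        omega
      · -- leaves T' = insert w (leaves T \ {u})
        have hset : leaves (oneChange T u v) = insert w (leaves T \ {u}) := by
          ext x
          rw [hmemL]
          simp only [Set.mem_insert_iff, Set.mem_diff, Set.mem_singleton_iff]
          constructor
          · rintro (⟨h1, h2⟩ | ⟨h1, _⟩)
            · exact Or.inr ⟨h1, h2⟩
            · exact Or.inl h1
          · rintro (rfl | ⟨h1, h2⟩)
            · exact Or.inr ⟨rfl, by omega⟩
            · exact Or.inl ⟨h1, h2⟩
        have h1 : (leaves T \ {u}).ncard + 1 = (leaves T).ncard :=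
          Set.ncard_diff_singleton_add_one huL
        have h2' : (leaves (oneChange T u v)).ncard = (leaves T \ {u}).ncard + 1 := by
          rw [hset, Set.ncard_insert_of_notMem (fun h => hwnL h.1)]
        omega
    · rintro ⟨h, _⟩; exact absurd huL h
  · rcases le_or_gt 2 (T.outDeg w) with h2 | h2
    · -- leaves T' = leaves T
      have hset : leaves (oneChange T u v) = leaves T := by
        ext x
        rw [hmemL]
        constructor
        · rintro (⟨h, _⟩ | ⟨_, h⟩)
          · exact h
          · omega
        · intro h
          exact Or.inl ⟨h, fun hx => huL (hx ▸ h)⟩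
      rw [hset]
      simp only [lt_self_iff_false, false_iff, not_and, not_not]
      intro _
      exact hbr.2 h2
    · -- leaves T' = insert w (leaves T), strictly more leaves
      have hset : leaves (oneChange T u v) = insert w (leaves T) := by
        ext x
        rw [hmemL]
        simp only [Set.mem_insert_iff]
        constructor
        · rintro (⟨h, _⟩ | ⟨h, _⟩)
          · exact Or.inr h
          · exact Or.inl h
        · rintro (rfl | h)
          · exact Or.inr ⟨rfl, by omega⟩
          · exact Or.inl ⟨h, fun hx => huL (hx ▸ h)⟩
      rw [hset, Set.ncard_insert_of_notMem hwnL]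
      constructor
      · intro _
        exact ⟨huL, fun hb => by have := hbr.1 hb; omega⟩
      · intro _; omega

end DirGraph
end

section
/- Let T be an out-tree of a digraph D such that |Head(Back_D^T(z))| ≥ k for some z ∈ V(T). Then D has an out-tree with at least k leaves. -/
namespace DirGraphAux

variable {α : Type*} {R S : α → α → Prop} {P : α → Prop}

lemma pred_of_mem_tail : ∀ (l : List α) {w : α}, l.Chain' R → w ∈ l.tail →
    ∃ x ∈ l, R x w := by
  intro l
  induction l with
  | nil => simp
  | cons x t ih =>
    intro w hc hw
    simp only [List.tail_cons] at hw
    match t, hw with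
    | y :: t', hw =>
      rcases List.isChain_cons_cons.1 hc with ⟨hxy, hc'⟩
      rcases List.mem_cons.1 hw with rfl | hw'
      · exact ⟨x, List.mem_cons_self, hxy⟩
      · rcases ih hc' hw' with ⟨x', hx', hR⟩
        exact ⟨x', List.mem_cons_of_mem _ hx', hR⟩

lemma crossing : ∀ (l : List α) (x : α), List.Chain R x l → ¬ P x → P (l.getLastD x) →
    ∃ a b, R a b ∧ ¬ P a ∧ P b := by
  intro l
  induction l with
  | nil => intro x _ hx hl; simp at hl; exact absurd hl hx
  | cons y t ih =>
    intro x hc hx hl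
    rcases List.chain_cons.1 hc with ⟨hxy, hc'⟩
    by_cases hy : P y
    · exact ⟨x, y, hxy, hx, hy⟩
    · exact ih y hc' hy (by rwa [List.getLastD_cons] at hl)

lemma chain'_mono_mem : ∀ (l : List α), l.Chain' R →
    (∀ x ∈ l, ∀ y ∈ l, R x y → S x y) → l.Chain' S := by
  intro l
  induction l with
  | nil => intro _ _; exact List.isChain_nil
  | cons x t ih =>
    intro hc hm
    match t, hc with
    | [], _ => exact List.isChain_singleton _
    | y :: t', hc =>
      rcases List.isChain_cons_cons.1 hc with ⟨hxy, hc'⟩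
      refine List.isChain_cons_cons.2 ⟨hm _ (by simp) _ (by simp) hxy, ih hc' ?_⟩
      intro a ha b hb hr
      exact hm a (List.mem_cons_of_mem _ ha) b (List.mem_cons_of_mem _ hb) hr

end DirGraphAux

namespace DirGraph

open DirGraphAux

variable {V : Type} {D T : DirGraph V} {u v w z : V}

lemma reaches_refl (hv : v ∈ D.verts) : D.Reaches v v :=
  ⟨[v], ⟨by simp, by simp, by simpa, List.isChain_singleton _⟩, rfl, rfl⟩

lemma Reaches.left_mem (h : D.Reaches u v) : u ∈ D.verts := by
  obtain ⟨l, hl, hh, _⟩ := h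
  exact hl.2.2.1 u (List.mem_of_mem_head? hh)

lemma Reaches.right_mem (h : D.Reaches u v) : v ∈ D.verts := by
  obtain ⟨l, hl, _, hg⟩ := h
  exact hl.2.2.1 v (List.mem_of_mem_getLast? hg)

/-- Every member of a dipath is reached from the head of the dipath. -/
lemma reaches_of_mem_dipath {l : List V} (hl : D.IsDipath l) (hh : l.head? = some z)
    (hw : w ∈ l) : D.Reaches z w := by
  obtain ⟨l₁, l₂, rfl⟩ := List.append_of_mem hw
  refine ⟨l₁ ++ [w], ⟨by simp, ?_, ?_, ?_⟩, ?_, List.getLast?_concat⟩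
  · have : (l₁ ++ [w]).Sublist (l₁ ++ w :: l₂) := by
      simpa using List.Sublist.append_left (by simp) l₁
    exact hl.2.1.sublist this
  · intro x hx
    refine hl.2.2.1 x ?_
    rcases List.mem_append.1 hx with h | h
    · exact List.mem_append.2 (Or.inl h)
    · simp at h; subst h; exact hw
  · have hpre : (l₁ ++ [w]) <+: (l₁ ++ w :: l₂) := ⟨l₂, by simp⟩
    exact hl.2.2.2.prefix hpre
  · cases l₁ with
    | nil => simp only [List.nil_append, List.head?_cons] at hh ⊢; exact hh
    | cons a t => simp only [List.cons_append, List.head?_cons] at hh ⊢; exact hh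

/-- Every member of a dipath reaches the last element of the dipath. -/
lemma mem_dipath_reaches {l : List V} (hl : D.IsDipath l) (hg : l.getLast? = some w)
    (hw : u ∈ l) : D.Reaches u w := by
  obtain ⟨l₁, l₂, rfl⟩ := List.append_of_mem hw
  refine ⟨u :: l₂, ⟨by simp, ?_, ?_, ?_⟩, rfl, ?_⟩
  · exact hl.2.1.sublist (by simp)
  · intro x hx
    exact hl.2.2.1 x (List.mem_append.2 (Or.inr hx))
  · exact hl.2.2.2.suffix ⟨l₁, rfl⟩
  · rwa [List.getLast?_append_of_ne_nil _ (by simp)] at hg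

/-- Extend reachability by one arc. -/
lemma Reaches.extend (h : D.Reaches z u) (ha : (u, w) ∈ D.arcs) (hw : w ∈ D.verts) :
    D.Reaches z w := by
  obtain ⟨l, hl, hh, hg⟩ := h
  by_cases hmem : w ∈ l
  · exact reaches_of_mem_dipath hl hh hmem
  · refine ⟨l ++ [w], ⟨by simp, ?_, ?_, ?_⟩, ?_, List.getLast?_concat⟩
    · simpa [List.nodup_append] using ⟨hl.2.1, fun x hx hxw => hmem (hxw ▸ hx)⟩
    · intro x hx
      rcases List.mem_append.1 hx with h' | h'
      · exact hl.2.2.1 x h'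
      · simp at h'; subst h'; exact hw
    · refine List.isChain_append.2 ⟨hl.2.2.2, List.isChain_singleton _, ?_⟩
      intro x hx y hy
      simp at hy; subst hy
      rw [hg] at hx; simp at hx; subst hx; exact ha
    · rw [List.head?_append_of_ne_nil _ hl.1, hh]

end DirGraph

namespace DirGraph

open DirGraphAux

variable {V : Type} [Fintype V] {T : DirGraph V} {r a b : V}

lemma IsOutTree.ne_root_of_arc (hTt : T.IsOutTree r) {x w : V} (hx : (x, w) ∈ T.arcs) :
    w ≠ r := by
  rintro rfl
  have h1 : 0 < T.inDeg w := by
    rw [inDeg, Set.ncard_pos (Set.toFinite _)]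
    exact ⟨(x, w), hx, rfl⟩
  rw [hTt.root_indeg] at h1
  exact absurd h1 (by omega)

lemma IsOutTree.reaches_antisymm (hTt : T.IsOutTree r)
    (hab : T.Reaches a b) (hba : T.Reaches b a) : a = b := by
  by_contra hne
  obtain ⟨p, hp, hpa, hpb⟩ := hab
  obtain ⟨q, hq, hqb, hqa⟩ := hba
  set C : V → Prop := fun w => w ∈ p ∨ w ∈ q with hC
  -- every vertex satisfying C has an in-arc from a vertex satisfying C
  have key : ∀ {l l' : List V} {u u' : V}, T.IsDipath l → l.head? = some u →
      T.IsDipath l' → l'.getLast? = some u → l'.head? = some u' → u ≠ u' →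
      ∀ w ∈ l, ∃ x, (x ∈ l ∨ x ∈ l') ∧ (x, w) ∈ T.arcs := by
    intro l l' u u' hl hlu hl' hl'u hl'u' huu' w hw
    match l, hlu with
    | hd :: t, hlu =>
      simp only [List.head?_cons, Option.some.injEq] at hlu
      obtain rfl : u = hd := hlu.symm
      rcases List.mem_cons.1 hw with rfl | hwt
      · -- w = u, the head of l; find predecessor in l'
        have hul' : w ∈ l' := List.mem_of_mem_getLast? hl'u
        match l', hl'u' with
        | hd' :: t', hl'u' =>
          simp only [List.head?_cons, Option.some.injEq] at hl'u'
          obtain rfl : u' = hd' := hl'u'.symm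
          have hwt' : w ∈ t' := by
            rcases List.mem_cons.1 hul' with h | h
            · exact absurd h huu'
            · exact h
          obtain ⟨x, hx, hxw⟩ := pred_of_mem_tail (u' :: t') hl'.2.2.2 hwt'
          exact ⟨x, Or.inr hx, hxw⟩
      · obtain ⟨x, hx, hxw⟩ := pred_of_mem_tail (u :: t) hl.2.2.2 (by simpa using hwt)
        exact ⟨x, Or.inl hx, hxw⟩
  have hin : ∀ w, C w → ∃ x, C x ∧ (x, w) ∈ T.arcs := by
    intro w hw
    rcases hw with hw | hw
    · obtain ⟨x, hx, hxw⟩ := key hp hpa hq hqa hqb hne w hw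
      exact ⟨x, hx, hxw⟩
    · obtain ⟨x, hx, hxw⟩ := key hq hqb hp hpb hpa (Ne.symm hne) w hw
      exact ⟨x, hx.symm, hxw⟩
  have hrC : ¬ C r := by
    intro h
    obtain ⟨x, _, hx⟩ := hin r h
    exact hTt.ne_root_of_arc hx rfl
  have haV : a ∈ T.verts := Reaches.left_mem ⟨p, hp, hpa, hpb⟩
  obtain ⟨l, hl, hlr, hla⟩ := hTt.reach_root a haV
  match l, hlr with
  | hd :: t, hlr =>
    simp only [List.head?_cons, Option.some.injEq] at hlr
    obtain rfl : r = hd := hlr.symm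
    have hchain : List.Chain (fun x y => (x, y) ∈ T.arcs) r t := hl.2.2.2
    have hgl : t.getLastD r = a := by
      rw [List.getLast?_cons] at hla
      rw [List.getLastD_eq_getLast?]
      cases ht : t.getLast? with
      | none => rw [ht] at hla; simpa using hla
      | some c => rw [ht] at hla; simpa using hla
    have hCa : C a := Or.inl (List.mem_of_mem_head? hpa)
    obtain ⟨x, y, hxy, hnx, hy⟩ := crossing t r hchain hrC (by rw [hgl]; exact hCa)
    obtain ⟨c, hcC, hcy⟩ := hin y hy
    have hyv : y ∈ T.verts := (hTt.arcs_mem _ hxy).2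
    have hyr : y ≠ r := fun h => hrC (h ▸ hy)
    have h1 := hTt.indeg_one y hyv hyr
    have h2 : 1 < T.inDeg y := by
      rw [inDeg, Set.one_lt_ncard_iff (Set.toFinite _)]
      refine ⟨(x, y), (c, y), ⟨hxy, rfl⟩, ⟨hcy, rfl⟩, ?_⟩
      intro h
      have hxc : x = c := congrArg Prod.fst h
      exact hnx (hxc ▸ hcC)
    omega

end DirGraph

namespace DirGraph

open DirGraphAux

theorem outTree_of_many_backArcs {V : Type} [Fintype V]
    (D T : DirGraph V) (r z : V) (k : ℕ) (hD : D.WellFormed)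
    (hT : IsOutTreeOf T D r) (hz : z ∈ T.verts)
    (hk : k ≤ (heads (backArcs D T z)).ncard) :
    ∃ (T' : DirGraph V) (r' : V), IsOutTreeOf T' D r' ∧ k ≤ (leaves T').ncard := by
  classical
  obtain ⟨hTt, hTs⟩ := hT
  set B := backArcs D T z with hB
  set H := heads B with hH
  -- choice of one back arc per head
  have hch : ∀ v : V, ∃ a : V × V, v ∈ H → (a ∈ B ∧ a.2 = v) := by
    intro v
    by_cases h : v ∈ H
    · obtain ⟨a, ha, ha2⟩ := (Set.mem_image _ _ _).1 h
      exact ⟨a, fun _ => ⟨ha, ha2⟩⟩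
    · exact ⟨(v, v), fun h' => absurd h' h⟩
  choose F hF using hch
  have hFB : ∀ v ∈ H, F v ∈ B := fun v hv => (hF v hv).1
  have hF2 : ∀ v ∈ H, (F v).2 = v := fun v hv => (hF v hv).2
  have hHz : ∀ v ∈ H, T.Reaches v z ∧ v ≠ z ∧ T.Reaches z (F v).1 ∧ F v ∈ D.arcs := by
    intro v hv
    have h1 := hFB v hv
    rw [hB, backArcs] at h1
    simp only [Set.mem_setOf_eq] at h1
    rw [hF2 v hv] at h1
    exact ⟨h1.2.1.1, h1.2.1.2, h1.2.2, h1.1⟩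
  have hHnR : ∀ v ∈ H, ¬ T.Reaches z v := by
    intro v hv hr
    exact (hHz v hv).2.1 (hTt.reaches_antisymm (hHz v hv).1 hr)
  have hzR : T.Reaches z z := reaches_refl hz
  have hext : ∀ {x w : V}, T.Reaches z x → (x, w) ∈ T.arcs → T.Reaches z w :=
    fun hx ha => hx.extend ha (hTt.arcs_mem _ ha).2
  -- the new out-tree
  set T' : DirGraph V :=
    ⟨{w | T.Reaches z w} ∪ H, {a | a ∈ T.arcs ∧ T.Reaches z a.1} ∪ F '' H⟩ with hT'
  -- transfer of dipaths from T to T'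
  have hdip : ∀ w, T.Reaches z w → ∃ l, T'.IsDipath l ∧ l.head? = some z ∧
      l.getLast? = some w ∧ ∀ x ∈ l, T.Reaches z x := by
    intro w hw
    obtain ⟨l, hl, hh, hg⟩ := hw
    have hmem : ∀ x ∈ l, T.Reaches z x := fun x hx => reaches_of_mem_dipath hl hh hx
    refine ⟨l, ⟨hl.1, hl.2.1, ?_, ?_⟩, hh, hg, hmem⟩
    · intro x hx
      exact Or.inl (hmem x hx)
    · refine chain'_mono_mem l hl.2.2.2 ?_
      intro x hx y _ hxy
      exact Or.inl ⟨hxy, hmem x hx⟩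
  -- reachability in T'
  have hreach : ∀ w ∈ T'.verts, T'.Reaches z w := by
    intro w hw
    rcases hw with hw | hw
    · obtain ⟨l, hl, hh, hg, _⟩ := hdip w hw
      exact ⟨l, hl, hh, hg⟩
    · obtain ⟨l, hl, hh, hg, hmem⟩ := hdip (F w).1 (hHz w hw).2.2.1
      have hwl : w ∉ l := fun h => hHnR w hw (hmem w h)
      have harc : ((F w).1, w) ∈ T'.arcs := by
        refine Or.inr ⟨w, hw, ?_⟩
        exact Prod.ext rfl (hF2 w hw)
      refine ⟨l ++ [w], ⟨by simp, ?_, ?_, ?_⟩, ?_, List.getLast?_concat⟩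
      · simpa [List.nodup_append] using ⟨hl.2.1, fun x hx hxw => hwl (hxw ▸ hx)⟩
      · intro x hx
        rcases List.mem_append.1 hx with h | h
        · exact hl.2.2.1 x h
        · simp at h; subst h; exact Or.inr hw
      · refine List.isChain_append.2 ⟨hl.2.2.2, List.isChain_singleton _, ?_⟩
        intro x hx y hy
        simp at hy; subst hy
        rw [hg] at hx; simp at hx; subst hx; exact harc
      · rw [List.head?_append_of_ne_nil _ hl.1, hh]
  have hzV : z ∈ T'.verts := Or.inl hzR
  -- T' is an out-tree of D with root z, with all of H as leaves
  refine ⟨T', z, ⟨⟨?_, hzV, ?_, ?_, hreach⟩, ?_, ?_⟩, ?_⟩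
  · -- arcs_mem
    rintro a (⟨ha, hza⟩ | ⟨v, hv, rfl⟩)
    · exact ⟨Or.inl hza, Or.inl (hext hza ha)⟩
    · refine ⟨Or.inl (hHz v hv).2.2.1, ?_⟩
      rw [hF2 v hv]
      exact Or.inr hv
  · -- root in-degree 0
    have : {a | a ∈ T'.arcs ∧ a.2 = z} = ∅ := by
      ext a
      simp only [Set.mem_empty_iff_false, iff_false, Set.mem_setOf_eq, not_and]
      rintro (⟨ha, hza⟩ | ⟨v, hv, rfl⟩) h2
      · have hne : a.1 ≠ a.2 := (hD a (hTs.2 ha)).2.2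
        have h1z : T.Reaches a.1 z := by
          refine ⟨[a.1, z], ⟨by simp, by simp [h2 ▸ hne], ?_, ?_⟩, rfl, rfl⟩
          · intro x hx
            rcases List.mem_cons.1 hx with rfl | hx
            · exact (hTt.arcs_mem a ha).1
            · simp at hx; subst hx
              exact h2 ▸ (hTt.arcs_mem a ha).2
          · simp only [List.Chain', List.isChain_cons_cons, List.isChain_singleton, and_true]
            exact h2 ▸ ha
        exact (h2 ▸ hne) (hTt.reaches_antisymm h1z hza)
      · rw [hF2 v hv] at h2
        exact (hHz v hv).2.1 h2
    rw [inDeg]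
    rw [show {a ∈ T'.arcs | a.2 = z} = ∅ from this]
    simp
  · -- in-degree one
    intro w hw hwz
    have hwcase : T.Reaches z w ∧ w ≠ z ∨ w ∈ H := by
      rcases hw with hw | hw
      · exact Or.inl ⟨hw, hwz⟩
      · exact Or.inr hw
    rcases hwcase with ⟨hwR, hwz'⟩ | hwH
    · -- w reachable from z in T
      have hwR' := hwR
      obtain ⟨l, hl, hh, hg⟩ := hwR
      have hwl : w ∈ l := List.mem_of_mem_getLast? hg
      obtain ⟨t, rfl⟩ : ∃ t, l = z :: t := by
        match l, hh with
        | hd :: t, hh =>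
          simp only [List.head?_cons, Option.some.injEq] at hh
          exact ⟨t, by rw [hh]⟩
      have hwt : w ∈ t := by
        rcases List.mem_cons.1 hwl with rfl | h
        · exact absurd rfl hwz'
        · exact h
      obtain ⟨x, hxl, hxw⟩ := pred_of_mem_tail (z :: t) hl.2.2.2 hwt
      have hxR : T.Reaches z x := reaches_of_mem_dipath hl hh hxl
      -- the unique in-arc of w in T
      have h1 : T.inDeg w = 1 :=
        hTt.indeg_one w (hTt.arcs_mem _ hxw).2 (hTt.ne_root_of_arc hxw)
      rw [inDeg, Set.ncard_eq_one] at h1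
      obtain ⟨a₀, ha₀⟩ := h1
      have hxa : (x, w) = a₀ := by
        have : (x, w) ∈ {a | a ∈ T.arcs ∧ a.2 = w} := ⟨hxw, rfl⟩
        rwa [ha₀, Set.mem_singleton_iff] at this
      have : {a | a ∈ T'.arcs ∧ a.2 = w} = {(x, w)} := by
        ext a
        simp only [Set.mem_singleton_iff, Set.mem_setOf_eq]
        constructor
        · rintro ⟨⟨ha, hza⟩ | ⟨v, hv, rfl⟩, h2⟩
          · have : a ∈ {a | a ∈ T.arcs ∧ a.2 = w} := ⟨ha, h2⟩
            rw [ha₀, Set.mem_singleton_iff] at this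
            rw [this, ← hxa]
          · rw [hF2 v hv] at h2
            exact absurd (h2 ▸ hwR') (hHnR v hv)
        · rintro rfl
          exact ⟨Or.inl ⟨hxw, hxR⟩, rfl⟩
      rw [inDeg, show {a ∈ T'.arcs | a.2 = w} = {(x, w)} from this, Set.ncard_singleton]
    · -- w is a head of a chosen back arc
      have : {a | a ∈ T'.arcs ∧ a.2 = w} = {F w} := by
        ext a
        simp only [Set.mem_singleton_iff, Set.mem_setOf_eq]
        constructor
        · rintro ⟨⟨ha, hza⟩ | ⟨v, hv, rfl⟩, h2⟩
          · exact absurd (h2 ▸ hext hza ha) (hHnR w hwH)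
          · rw [hF2 v hv] at h2
            rw [h2]
        · rintro rfl
          exact ⟨Or.inr ⟨w, hwH, rfl⟩, hF2 w hwH⟩
      rw [inDeg, show {a ∈ T'.arcs | a.2 = w} = {F w} from this, Set.ncard_singleton]
  · -- vertices in D
    rintro w (hw | hw)
    · exact hTs.1 hw.right_mem
    · obtain ⟨a, ha, rfl⟩ := (Set.mem_image _ _ _).1 hw
      exact (hD a (by exact ha.1)).2.1
  · -- arcs in D
    rintro a (⟨ha, _⟩ | ⟨v, hv, rfl⟩)
    · exact hTs.2 ha
    · exact (hHz v hv).2.2.2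
  · -- at least k leaves
    have hsub : H ⊆ leaves T' := by
      intro v hv
      refine ⟨Or.inr hv, ?_⟩
      have : {a | a ∈ T'.arcs ∧ a.1 = v} = ∅ := by
        ext a
        simp only [Set.mem_empty_iff_false, iff_false, Set.mem_setOf_eq, not_and]
        rintro (⟨_, hza⟩ | ⟨u, hu, rfl⟩) h1
        · exact hHnR v hv (h1 ▸ hza)
        · exact hHnR v hv (h1 ▸ (hHz u hu).2.2.1)
      rw [outDeg, show {a ∈ T'.arcs | a.1 = v} = ∅ from this]
      simp
    exact le_trans hk (Set.ncard_le_ncard hsub (Set.toFinite _))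

end DirGraph
end

section
/- Let T be a 1-optimal out-branching of a digraph D with |Leaf(T)| ≤ k − 1, and suppose that for all vertices z ∈ V(D) it holds that |Head(Back_D^T(z))| ≤ 3k − 1. Then D has a tree decomposition of width at most 6k − 5. -/
namespace DirGraphAux

open List Relation

variable {V : Type} {R S : V → V → Prop} {l : List V} {a b : V} {Q : Set V}

theorem chain'_rtg (l : List V) (hc : l.Chain' R) :
    ∀ {a b : V}, l.head? = some a → l.getLast? = some b → Relation.ReflTransGen R a b := by
  induction l with
  | nil => intro a b h; simp at h
  | cons x t ih =>
    intro a b h1 h2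
    simp only [head?_cons, Option.some.injEq] at h1; subst h1
    cases t with
    | nil => simp at h2; subst h2; rfl
    | cons y s =>
      have hr := List.isChain_cons_cons.mp hc
      exact ReflTransGen.head hr.1 (ih hr.2 rfl (by simpa using h2))

theorem rtg_chain' (h : Relation.ReflTransGen R a b) :
    ∃ l : List V, l ≠ [] ∧ l.Nodup ∧ l.Chain' R ∧ l.head? = some a ∧ l.getLast? = some b := by
  induction h using ReflTransGen.head_induction_on with
  | refl => exact ⟨[b], by simp [List.Chain']⟩
  | head hstep _ ih =>
    rename_i x y _
    obtain ⟨l, hne, hnd, hch, hh, hl⟩ := ih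
    by_cases hx : x ∈ l
    · obtain ⟨s, t, rfl⟩ := List.append_of_mem hx
      refine ⟨x :: t, by simp, ?_, hch.suffix ⟨s, rfl⟩, rfl, ?_⟩
      · exact (hnd.sublist (List.IsSuffix.sublist ⟨s, rfl⟩))
      · rw [← hl, List.getLast?_append, Option.or_of_isSome (by simp [List.getLast?_isSome])]
    · refine ⟨x :: l, by simp, by simp [hnd, hx], ?_, rfl, ?_⟩
      · refine List.isChain_cons.mpr ⟨fun z hz => ?_, hch⟩
        cases l with
        | nil => simp at hne
        | cons c cs => simp_all
      · rw [List.getLast?_cons, hl]; simp_all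

/-- propagate a membership property along a chain. -/
theorem chain'_mem (l : List V) (hc : l.Chain' R)
    (hS : ∀ c d, R c d → d ∈ Q) :
    ∀ {a : V}, l.head? = some a → a ∈ Q → ∀ y ∈ l, y ∈ Q := by
  induction l with
  | nil => intro a _ _ y hy; simp at hy
  | cons x t ih =>
    intro a h1 ha y hy
    simp only [head?_cons, Option.some.injEq] at h1; subst h1
    rcases List.mem_cons.mp hy with rfl | hy'
    · exact ha
    · cases t with
      | nil => simp at hy'
      | cons c cs =>
        have hr := List.isChain_cons_cons.mp hc
        exact ih hr.2 rfl (hS _ _ hr.1) y hy'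

/-- strengthen a chain using membership of the two endpoints of each link. -/
theorem chain'_of_chain'_mem : ∀ (l : List V), l.Chain' R →
    (∀ a ∈ l, ∀ b ∈ l, R a b → S a b) → l.Chain' S
  | [], _, _ => List.isChain_nil
  | [_], _, _ => List.isChain_singleton _
  | x :: y :: t, hc, h => by
    have hr := List.isChain_cons_cons.mp hc
    refine List.isChain_cons_cons.mpr ⟨h x (by simp) y (by simp) hr.1, ?_⟩
    exact chain'_of_chain'_mem (y :: t) hr.2 (fun a ha b hb hab => h a (by simp [ha]) b (by simp [hb]) hab)

/-- strengthen a chain using that the head of each link lies in the tail. -/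
theorem chain'_imp_tail : ∀ (l : List V), l.Chain' R →
    (∀ a b, R a b → b ∈ l.tail → S a b) → l.Chain' S
  | [], _, _ => List.isChain_nil
  | [_], _, _ => List.isChain_singleton _
  | x :: y :: t, hc, h => by
    have hr := List.isChain_cons_cons.mp hc
    refine List.isChain_cons_cons.mpr ⟨h x y hr.1 (by simp), ?_⟩
    exact chain'_imp_tail (y :: t) hr.2 (fun a b hab hb => h a b hab (by simp; right; simpa using hb))

theorem mem_of_getLast? {l : List V} {a : V} (h : l.getLast? = some a) : a ∈ l := by
  obtain ⟨ys, rfl⟩ := List.getLast?_eq_some_iff.mp h; simp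

theorem mem_of_head? {l : List V} {a : V} (h : l.head? = some a) : a ∈ l := by
  cases l with
  | nil => simp at h
  | cons x t => simp at h; simp [h]

theorem nodup_head_last_eq {r : V} (l : List V) (hl : l.Nodup)
    (h1 : l.head? = some r) (h2 : l.getLast? = some r) : l = [r] := by
  cases l with
  | nil => simp at h1
  | cons x t =>
    simp only [head?_cons, Option.some.injEq] at h1; subst h1
    cases t with
    | nil => rfl
    | cons c cs =>
      exfalso
      rw [List.getLast?_cons_cons] at h2
      exact (List.nodup_cons.mp hl).1 (by simpa using mem_of_getLast? h2)

end DirGraphAux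

namespace DirGraph

open List Relation DirGraphAux
open scoped Classical

set_option linter.unusedSectionVars false

variable {V : Type} [Fintype V] {T D : DirGraph V} {r u v w z p q : V}

/-- the step relation of a digraph -/
def Step (T : DirGraph V) (a b : V) : Prop := (a, b) ∈ T.arcs

/-- arcs have both endpoints in the vertex set -/
def ArcsMem (T : DirGraph V) : Prop := ∀ a ∈ T.arcs, a.1 ∈ T.verts ∧ a.2 ∈ T.verts

theorem IsOutTree.arcsMem (h : T.IsOutTree r) : T.ArcsMem := h.arcs_mem

theorem reaches_head_mem (h : T.Reaches u v) : u ∈ T.verts := by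
  obtain ⟨l, hl, h1, _⟩ := h
  exact hl.2.2.1 u (DirGraphAux.mem_of_head? h1)

theorem reaches_last_mem (h : T.Reaches u v) : v ∈ T.verts := by
  obtain ⟨l, hl, _, h2⟩ := h
  exact hl.2.2.1 v (DirGraphAux.mem_of_getLast? h2)

theorem reaches_refl_s9 (hu : u ∈ T.verts) : T.Reaches u u :=
  ⟨[u], ⟨by simp, by simp, by simpa, by simp [List.Chain']⟩, by simp, by simp⟩

theorem Reaches.rtg (h : T.Reaches u v) : Relation.ReflTransGen (Step T) u v := by
  obtain ⟨l, hl, h1, h2⟩ := h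
  exact chain'_rtg l hl.2.2.2 h1 h2

theorem reaches_of_rtg (hT : T.ArcsMem) (hu : u ∈ T.verts)
    (h : Relation.ReflTransGen (Step T) u v) : T.Reaches u v := by
  obtain ⟨l, hne, hnd, hch, h1, h2⟩ := rtg_chain' h
  refine ⟨l, ⟨hne, hnd, ?_, hch⟩, h1, h2⟩
  exact chain'_mem l hch (fun c d hcd => (hT _ hcd).2) h1 hu

theorem reaches_trans (hT : T.ArcsMem) (h1 : T.Reaches u v) (h2 : T.Reaches v w) :
    T.Reaches u w :=
  reaches_of_rtg hT (reaches_head_mem h1) (h1.rtg.trans h2.rtg)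

theorem reaches_arc (hT : T.ArcsMem) (h1 : T.Reaches u v) (h2 : (v, w) ∈ T.arcs) :
    T.Reaches u w :=
  reaches_of_rtg hT (reaches_head_mem h1) (h1.rtg.tail h2)

/-- splitting a reachability statement at an intermediate vertex of a dipath -/
theorem reaches_split (l : List V) (hl : T.IsDipath l) (h1 : l.head? = some u)
    (h2 : l.getLast? = some v) (hy : w ∈ l) : T.Reaches u w ∧ T.Reaches w v := by
  obtain ⟨s, t, rfl⟩ := List.append_of_mem hy
  constructor
  · refine ⟨s ++ [w], ⟨by simp, ?_, ?_, ?_⟩, ?_, by simp⟩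
    · exact hl.2.1.sublist (List.IsPrefix.sublist ⟨t, by simp⟩)
    · intro x hx
      refine hl.2.2.1 x ?_
      rcases List.mem_append.mp hx with h | h
      · simp [h]
      · simp at h; simp [h]
    · exact hl.2.2.2.prefix ⟨t, by simp⟩
    · rw [← h1, List.head?_append]
      cases s <;> simp
  · refine ⟨w :: t, ⟨by simp, ?_, ?_, ?_⟩, by simp, ?_⟩
    · exact hl.2.1.sublist (List.IsSuffix.sublist ⟨s, rfl⟩)
    · intro x hx; exact hl.2.2.1 x (by simp [hx])
    · exact hl.2.2.2.suffix ⟨s, rfl⟩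
    · rw [← h2, List.getLast?_append, Option.or_of_isSome (by simp [List.getLast?_isSome])]

theorem not_arc_head_root (hT : T.IsOutTree r) : (u, r) ∉ T.arcs := by
  intro h
  have h0 := hT.root_indeg
  unfold inDeg at h0
  rw [Set.ncard_eq_zero (Set.toFinite _)] at h0
  exact absurd h0 (Set.nonempty_iff_ne_empty.mp ⟨(u, r), h, rfl⟩)

theorem arc_head_ne_root (hT : T.IsOutTree r) (h : (u, v) ∈ T.arcs) : v ≠ r := by
  rintro rfl; exact not_arc_head_root hT h

theorem parent_eq (hT : T.IsOutTree r) (h1 : (u, v) ∈ T.arcs) (h2 : (w, v) ∈ T.arcs) :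
    u = w := by
  have hv : v ∈ T.verts := (hT.arcs_mem _ h1).2
  have hone := hT.indeg_one v hv (arc_head_ne_root hT h1)
  unfold inDeg at hone
  obtain ⟨a, ha⟩ := Set.ncard_eq_one.mp hone
  have e1 : (u, v) ∈ ({a} : Set (V × V)) := ha ▸ ⟨h1, rfl⟩
  have e2 : (w, v) ∈ ({a} : Set (V × V)) := ha ▸ ⟨h2, rfl⟩
  simp only [Set.mem_singleton_iff] at e1 e2
  rw [← e2] at e1; exact congrArg Prod.fst e1

theorem exists_parent (hT : T.IsOutTree r) (hv : v ∈ T.verts) (hvr : v ≠ r) :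
    ∃ p, (p, v) ∈ T.arcs := by
  have hone := hT.indeg_one v hv hvr
  unfold inDeg at hone
  obtain ⟨a, ha⟩ := Set.ncard_eq_one.mp hone
  have : a ∈ {a ∈ T.arcs | a.2 = v} := ha ▸ rfl
  exact ⟨a.1, by obtain ⟨h1, h2⟩ := this; rwa [← h2, Prod.mk.eta]⟩

/-- uniqueness of dipaths from the root -/
theorem dipath_from_root_unique (hT : T.IsOutTree r) :
    ∀ (n : ℕ) (l₁ l₂ : List V), l₁.length ≤ n → l₂.length ≤ n →
    T.IsDipath l₁ → T.IsDipath l₂ → l₁.head? = some r → l₂.head? = some r →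
    l₁.getLast? = l₂.getLast? → l₁ = l₂ := by
  intro n
  induction n with
  | zero =>
    intro l₁ l₂ h1 h2 d1 _ _ _ _
    interval_cases h : l₁.length
    · exact absurd (List.length_eq_zero_iff.mp h) d1.1
  | succ n ih =>
    intro l₁ l₂ hn1 hn2 d1 d2 hh1 hh2 hlast
    obtain ⟨b, hb⟩ : ∃ b, l₁.getLast? = some b := by
      cases h : l₁.getLast? with
      | none => exact absurd (List.getLast?_eq_none_iff.mp h) d1.1
      | some b => exact ⟨b, rfl⟩
    by_cases hbr : b = r
    · subst hbr
      rw [nodup_head_last_eq l₁ d1.2.1 hh1 hb, nodup_head_last_eq l₂ d2.2.1 hh2 (hlast ▸ hb)]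
    · -- decompose both as m ++ [b]
      obtain ⟨m₁, rfl⟩ := List.getLast?_eq_some_iff.mp hb
      obtain ⟨m₂, rfl⟩ := List.getLast?_eq_some_iff.mp (hlast ▸ hb)
      have hm1ne : m₁ ≠ [] := by rintro rfl; simp at hh1; exact hbr hh1
      have hm2ne : m₂ ≠ [] := by rintro rfl; simp at hh2; exact hbr hh2
      obtain ⟨p₁, hp₁⟩ : ∃ p, m₁.getLast? = some p := by
        cases h : m₁.getLast? with
        | none => exact absurd (List.getLast?_eq_none_iff.mp h) hm1ne
        | some p => exact ⟨p, rfl⟩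
      obtain ⟨p₂, hp₂⟩ : ∃ p, m₂.getLast? = some p := by
        cases h : m₂.getLast? with
        | none => exact absurd (List.getLast?_eq_none_iff.mp h) hm2ne
        | some p => exact ⟨p, rfl⟩
      have harc1 : (p₁, b) ∈ T.arcs := by
        have := (List.isChain_append.mp d1.2.2.2).2.2
        exact this p₁ hp₁ b rfl
      have harc2 : (p₂, b) ∈ T.arcs := by
        have := (List.isChain_append.mp d2.2.2.2).2.2
        exact this p₂ hp₂ b rfl
      have hpp : p₁ = p₂ := parent_eq hT harc1 harc2
      subst hpp
      have dm1 : T.IsDipath m₁ := ⟨hm1ne, d1.2.1.sublist (by simp),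
        fun x hx => d1.2.2.1 x (by simp [hx]), d1.2.2.2.prefix ⟨[b], rfl⟩⟩
      have dm2 : T.IsDipath m₂ := ⟨hm2ne, d2.2.1.sublist (by simp),
        fun x hx => d2.2.2.1 x (by simp [hx]), d2.2.2.2.prefix ⟨[b], rfl⟩⟩
      have hlen1 : m₁.length ≤ n := by simp at hn1; omega
      have hlen2 : m₂.length ≤ n := by simp at hn2; omega
      have hhm1 : m₁.head? = some r := by
        rw [← hh1, List.head?_append]; cases m₁ with
        | nil => exact absurd rfl hm1ne
        | cons a t => simp
      have hhm2 : m₂.head? = some r := by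
        rw [← hh2, List.head?_append]; cases m₂ with
        | nil => exact absurd rfl hm2ne
        | cons a t => simp
      rw [ih m₁ m₂ hlen1 hlen2 dm1 dm2 hhm1 hhm2 (hp₁.trans hp₂.symm)]

/-- the dipath from the root to `v` -/
noncomputable def rootPath (T : DirGraph V) (r : V) (hT : T.IsOutTree r) (v : V) : List V :=
  if h : v ∈ T.verts then Classical.choose (hT.reach_root v h) else []

theorem rootPath_spec (hT : T.IsOutTree r) (hv : v ∈ T.verts) :
    T.IsDipath (rootPath T r hT v) ∧ (rootPath T r hT v).head? = some r ∧
      (rootPath T r hT v).getLast? = some v := by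
  unfold rootPath
  rw [dif_pos hv]

  exact Classical.choose_spec (hT.reach_root v hv)

/-- the depth of a vertex -/
noncomputable def depth (T : DirGraph V) (r : V) (hT : T.IsOutTree r) (v : V) : ℕ :=
  (rootPath T r hT v).length

theorem depth_arc (hT : T.IsOutTree r) (harc : (p, v) ∈ T.arcs) :
    depth T r hT v = depth T r hT p + 1 := by
  have hp : p ∈ T.verts := (hT.arcs_mem _ harc).1
  have hv : v ∈ T.verts := (hT.arcs_mem _ harc).2
  obtain ⟨dp, hp1, hp2⟩ := rootPath_spec hT hp
  obtain ⟨dv, hv1, hv2⟩ := rootPath_spec hT hv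
  set lp := rootPath T r hT p with hlp
  set lv := rootPath T r hT v with hlv
  -- v is not on the path to p
  have hvnot : v ∉ lp := by
    intro hmem
    obtain ⟨s, t, hst⟩ := List.append_of_mem hmem
    cases s with
    | nil =>
      -- v is the head, i.e. v = r
      have hvr : v = r := by rw [hst] at hp1; simpa using hp1
      exact not_arc_head_root hT (show (p, r) ∈ T.arcs by rwa [← hvr])
    | cons x s' =>
      -- v has a predecessor w0 on the path, so w0 = p; but p is the last element
      obtain h | ⟨s'', w0, hs⟩ := (x :: s').eq_nil_or_concat
      · simp at h
      have hchain := dp.2.2.2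
      rw [hst, hs] at hchain
      have h3 : List.Chain' (fun a b => (a, b) ∈ T.arcs) s'' ∧
          ((w0, v) ∈ T.arcs ∧ List.Chain' (fun a b => (a, b) ∈ T.arcs) (v :: t)) ∧
          ∀ x : V, s''.getLast? = some x → (x, w0) ∈ T.arcs := by
        simpa [List.Chain', List.isChain_append] using hchain
      have harc0 : (w0, v) ∈ T.arcs := h3.2.1.1
      have hw0 : w0 = p := parent_eq hT harc0 harc
      -- but p is the last element of lp, contradiction with nodup
      have hnd := dp.2.1
      rw [hst, hs] at hnd hp2
      have hpmem : p ∈ v :: t := by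
        rw [List.concat_eq_append, List.append_assoc, List.getLast?_append,
          Option.or_of_isSome (by simp [List.getLast?_isSome])] at hp2
        exact DirGraphAux.mem_of_getLast? hp2
      have hsuf : List.Nodup (w0 :: v :: t) :=
        hnd.sublist (List.IsSuffix.sublist ⟨s'', by simp⟩)
      exact (List.nodup_cons.mp hsuf).1 (by rwa [hw0])
  -- lp ++ [v] is a dipath from r to v
  have hdip : T.IsDipath (lp ++ [v]) := by
    refine ⟨by simp, ?_, ?_, ?_⟩
    · exact List.nodup_append.mpr ⟨dp.2.1, List.nodup_singleton v, fun a ha b hb => by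
        simp at hb; subst hb; rintro rfl; exact hvnot ha⟩
    · intro x hx
      rcases List.mem_append.mp hx with h | h
      · exact dp.2.2.1 x h
      · simp at h; subst h; exact hv
    · rw [List.Chain', List.isChain_append]
      refine ⟨dp.2.2.2, by simp, fun x hx y hy => ?_⟩
      simp only [head?_cons, Option.mem_def, Option.some.injEq] at hy
      subst hy
      rw [hp2] at hx
      simp only [Option.mem_def, Option.some.injEq] at hx
      subst hx
      exact harc
  -- conclude by uniqueness
  have hhead : (lp ++ [v]).head? = some r := by
    rw [List.head?_append]
    cases hlpc : lp with
    | nil => exact absurd hlpc dp.1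
    | cons a t => rw [hlpc] at hp1; simpa using hp1
  have := dipath_from_root_unique hT (max lv.length (lp ++ [v]).length) lv (lp ++ [v])
    (le_max_left _ _) (le_max_right _ _) dv hdip hv1 hhead
    (by rw [hv2, List.getLast?_concat])
  unfold depth
  rw [← hlv, ← hlp, this]
  simp

theorem arcs_card (hT : T.IsOutTree r) : T.arcs.ncard + 1 = T.verts.ncard := by
  rw [Set.ncard_eq_toFinset_card' T.arcs, Set.ncard_eq_toFinset_card' T.verts]
  have h2 : T.arcs.toFinset.card = (T.verts.toFinset.erase r).card := by
    apply Finset.card_bij (fun a _ => a.2)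
    · intro a ha
      rw [Set.mem_toFinset] at ha
      rw [Finset.mem_erase, Set.mem_toFinset]
      exact ⟨arc_head_ne_root hT ha, (hT.arcs_mem _ ha).2⟩
    · intro a ha b hb h
      rw [Set.mem_toFinset] at ha hb
      have h1 : a.1 = b.1 := parent_eq hT (v := a.2) (by rwa [Prod.mk.eta])
        (by rw [h]; rwa [Prod.mk.eta])
      exact Prod.ext h1 h
    · intro v hv
      rw [Finset.mem_erase, Set.mem_toFinset] at hv
      obtain ⟨p, hp⟩ := exists_parent hT hv.2 hv.1
      exact ⟨(p, v), by rwa [Set.mem_toFinset], rfl⟩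
  have hr : r ∈ T.verts.toFinset := by rw [Set.mem_toFinset]; exact hT.root_mem
  rw [h2, Finset.card_erase_of_mem hr]
  have := Finset.card_pos.mpr ⟨r, hr⟩
  omega

theorem outDeg_eq_filter_card (T : DirGraph V) (v : V) :
    T.outDeg v = (T.arcs.toFinset.filter (fun a => a.1 = v)).card := by
  unfold outDeg
  rw [show {a ∈ T.arcs | a.1 = v} = ↑(T.arcs.toFinset.filter (fun a => a.1 = v)) by
    ext a; simp]
  rw [Set.ncard_coe_finset]

theorem sum_outDeg (hT : T.IsOutTree r) :
    ∑ v ∈ T.verts.toFinset, T.outDeg v = T.arcs.ncard := by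
  rw [Set.ncard_eq_toFinset_card' T.arcs]
  rw [Finset.card_eq_sum_card_fiberwise (f := Prod.fst) (t := T.verts.toFinset)
    (fun a ha => by simp only [Finset.mem_coe, Set.mem_toFinset] at *; exact (hT.arcs_mem _ ha).1)]
  exact Finset.sum_congr rfl (fun v _ => outDeg_eq_filter_card T v)

theorem brSucc_le_sum (hT : T.IsOutTree r) :
    (brSucc T).ncard ≤ ∑ v ∈ T.verts.toFinset.filter (fun v => 2 ≤ T.outDeg v), T.outDeg v := by
  have himg : brSucc T = Prod.snd '' {a ∈ T.arcs | 2 ≤ T.outDeg a.1} := by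
    ext z
    simp only [brSucc, Set.mem_setOf_eq, Set.mem_image]
    constructor
    · rintro ⟨u, h1, h2⟩; exact ⟨(u, z), ⟨h1, h2⟩, rfl⟩
    · rintro ⟨a, ⟨h1, h2⟩, rfl⟩; exact ⟨a.1, by rwa [Prod.mk.eta], h2⟩
  rw [himg]
  refine le_trans (Set.ncard_image_le (Set.toFinite _)) ?_
  rw [show {a ∈ T.arcs | 2 ≤ T.outDeg a.1} =
    ↑(T.arcs.toFinset.filter (fun a => 2 ≤ T.outDeg a.1)) by ext a; simp,
    Set.ncard_coe_finset]
  rw [Finset.card_eq_sum_card_fiberwise (f := Prod.fst)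
    (t := T.verts.toFinset.filter (fun v => 2 ≤ T.outDeg v)) (fun a ha => by
      simp only [Finset.mem_coe, Finset.mem_filter, Set.mem_toFinset] at ha ⊢
      exact ⟨(hT.arcs_mem _ ha.1).1, ha.2⟩)]
  apply Finset.sum_le_sum
  intro v hv
  simp only [Finset.mem_filter] at hv
  rw [outDeg_eq_filter_card]
  apply Finset.card_le_card
  intro a
  simp only [Finset.mem_filter, Set.mem_toFinset, and_imp]
  intro h1 _ h3
  exact ⟨h1, h3⟩

theorem leaf_branch_count (hT : T.IsOutTree r) :
    1 ≤ (leaves T).ncard ∧ (brSucc T).ncard + 2 ≤ 2 * (leaves T).ncard := by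
  have hsum : ∑ v ∈ T.verts.toFinset, T.outDeg v + 1 = T.verts.toFinset.card := by
    rw [sum_outDeg hT, arcs_card hT, Set.ncard_eq_toFinset_card' T.verts]
  have hLcard : (leaves T).ncard =
      (T.verts.toFinset.filter (fun v => T.outDeg v = 0)).card := by
    rw [show leaves T = ↑(T.verts.toFinset.filter (fun v => T.outDeg v = 0)) by
      ext z; simp [leaves], Set.ncard_coe_finset]
  have hsplit : ∑ v ∈ T.verts.toFinset.filter (fun v => T.outDeg v = 0), T.outDeg v
      + ∑ v ∈ T.verts.toFinset.filter (fun v => ¬ T.outDeg v = 0), T.outDeg v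
      = ∑ v ∈ T.verts.toFinset, T.outDeg v :=
    Finset.sum_filter_add_sum_filter_not _ _ _
  have hsplit2 : ∑ v ∈ (T.verts.toFinset.filter (fun v => ¬ T.outDeg v = 0)).filter
        (fun v => T.outDeg v = 1), T.outDeg v
      + ∑ v ∈ (T.verts.toFinset.filter (fun v => ¬ T.outDeg v = 0)).filter
        (fun v => ¬ T.outDeg v = 1), T.outDeg v
      = ∑ v ∈ T.verts.toFinset.filter (fun v => ¬ T.outDeg v = 0), T.outDeg v :=
    Finset.sum_filter_add_sum_filter_not _ _ _
  have hcard : (T.verts.toFinset.filter (fun v => T.outDeg v = 0)).card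
      + (T.verts.toFinset.filter (fun v => ¬ T.outDeg v = 0)).card
      = T.verts.toFinset.card :=
    Finset.card_filter_add_card_filter_not _
  have hcard2 : ((T.verts.toFinset.filter (fun v => ¬ T.outDeg v = 0)).filter
        (fun v => T.outDeg v = 1)).card
      + ((T.verts.toFinset.filter (fun v => ¬ T.outDeg v = 0)).filter
        (fun v => ¬ T.outDeg v = 1)).card
      = (T.verts.toFinset.filter (fun v => ¬ T.outDeg v = 0)).card :=
    Finset.card_filter_add_card_filter_not _
  have h0 : ∑ v ∈ T.verts.toFinset.filter (fun v => T.outDeg v = 0), T.outDeg v = 0 :=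
    Finset.sum_eq_zero (fun v hv => by simp only [Finset.mem_filter] at hv; exact hv.2)
  have h1 : ∑ v ∈ (T.verts.toFinset.filter (fun v => ¬ T.outDeg v = 0)).filter
      (fun v => T.outDeg v = 1), T.outDeg v
      = ((T.verts.toFinset.filter (fun v => ¬ T.outDeg v = 0)).filter
        (fun v => T.outDeg v = 1)).card := by
    rw [Finset.sum_congr rfl (fun v hv => by
      simp only [Finset.mem_filter] at hv; exact hv.2)]
    simp
  have h2 : 2 * ((T.verts.toFinset.filter (fun v => ¬ T.outDeg v = 0)).filter
      (fun v => ¬ T.outDeg v = 1)).card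
      ≤ ∑ v ∈ (T.verts.toFinset.filter (fun v => ¬ T.outDeg v = 0)).filter
        (fun v => ¬ T.outDeg v = 1), T.outDeg v := by
    calc 2 * ((T.verts.toFinset.filter (fun v => ¬ T.outDeg v = 0)).filter
        (fun v => ¬ T.outDeg v = 1)).card
        = ∑ _v ∈ (T.verts.toFinset.filter (fun v => ¬ T.outDeg v = 0)).filter
          (fun v => ¬ T.outDeg v = 1), 2 := by rw [Finset.sum_const]; ring
      _ ≤ _ := Finset.sum_le_sum (fun v hv => by
          simp only [Finset.mem_filter] at hv; omega)
  have hS2eq : T.verts.toFinset.filter (fun v => 2 ≤ T.outDeg v)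
      = (T.verts.toFinset.filter (fun v => ¬ T.outDeg v = 0)).filter
        (fun v => ¬ T.outDeg v = 1) := by
    rw [Finset.filter_filter]
    apply Finset.filter_congr
    intro v _
    constructor
    · intro h; omega
    · intro h; omega
  have hbr := brSucc_le_sum hT
  rw [hS2eq] at hbr
  exact ⟨by omega, by omega⟩

theorem mem_oneChange_arcs {a : V × V} :
    a ∈ (oneChange T u v).arcs ↔ (a ∈ T.arcs ∧ a.2 ≠ v) ∨ a = (u, v) := by
  simp [oneChange]; tauto

theorem outDeg_eq_zero_iff : T.outDeg z = 0 ↔ {a ∈ T.arcs | a.1 = z} = ∅ := by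
  unfold outDeg
  rw [Set.ncard_eq_zero (Set.toFinite _)]

theorem outDeg_ne_zero (h : (z, q) ∈ T.arcs) : T.outDeg z ≠ 0 := by
  intro h0
  rw [outDeg_eq_zero_iff] at h0
  exact absurd h0 (Set.nonempty_iff_ne_empty.mp ⟨(z, q), h, rfl⟩)

theorem mem_leaves_iff : z ∈ leaves T ↔ z ∈ T.verts ∧ T.outDeg z = 0 := Iff.rfl

theorem oneChange_isOutBranching (hD : D.WellFormed) (hTb : IsOutBranching T D r)
    (huv : (u, v) ∈ D.arcs) (hvr : v ≠ r) (hnvu : ¬ T.Reaches v u) :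
    IsOutBranching (oneChange T u v) D r := by
  obtain ⟨⟨hT, hsub⟩, hverts⟩ := hTb
  have hu : u ∈ T.verts := hverts ▸ (hD _ huv).1
  have hv : v ∈ T.verts := hverts ▸ (hD _ huv).2.1
  have harcsMem : (oneChange T u v).ArcsMem := by
    intro a ha
    rw [mem_oneChange_arcs] at ha
    rcases ha with ⟨h1, _⟩ | rfl
    · exact hT.arcs_mem _ h1
    · exact ⟨hu, hv⟩
  have hinv : {a ∈ (oneChange T u v).arcs | a.2 = v} = {(u, v)} := by
    ext a
    simp only [Set.mem_setOf_eq, mem_oneChange_arcs, Set.mem_singleton_iff]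
    constructor
    · rintro ⟨⟨_, h2⟩ | rfl, h3⟩
      · exact absurd h3 h2
      · rfl
    · rintro rfl; exact ⟨Or.inr rfl, rfl⟩
  have hinne : ∀ z, z ≠ v → (oneChange T u v).inDeg z = T.inDeg z := by
    intro z hz
    unfold inDeg
    congr 1
    ext a
    simp only [Set.mem_setOf_eq, mem_oneChange_arcs]
    constructor
    · rintro ⟨⟨h1, _⟩ | rfl, h3⟩
      · exact ⟨h1, h3⟩
      · exact absurd h3 (fun he => hz he.symm)
    · rintro ⟨h1, h3⟩
      exact ⟨Or.inl ⟨h1, by rw [h3]; exact hz⟩, h3⟩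
  have key1 : ∀ z ∈ T.verts, ¬ T.Reaches v z →
      Relation.ReflTransGen (Step (oneChange T u v)) r z := by
    intro z hz hnz
    obtain ⟨l, hl, h1, h2⟩ := hT.reach_root z hz
    have hvl : v ∉ l := fun hmem => hnz (reaches_split l hl h1 h2 hmem).2
    have hchain : l.Chain' (Step (oneChange T u v)) := by
      refine chain'_of_chain'_mem l hl.2.2.2 (fun a _ b hb hab => ?_)
      rw [Step, mem_oneChange_arcs]
      exact Or.inl ⟨hab, fun he => hvl (he ▸ hb)⟩
    exact chain'_rtg l hchain h1 h2
  have key2 : ∀ z, T.Reaches v z →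
      Relation.ReflTransGen (Step (oneChange T u v)) v z := by
    intro z hz
    obtain ⟨l, hl, h1, h2⟩ := hz
    have hchain : l.Chain' (Step (oneChange T u v)) := by
      refine chain'_imp_tail l hl.2.2.2 (fun a b hab hb => ?_)
      rw [Step, mem_oneChange_arcs]
      refine Or.inl ⟨hab, fun he => ?_⟩
      subst he
      cases l with
      | nil => simp at h1
      | cons x t =>
        simp only [head?_cons, Option.some.injEq] at h1
        simp only [List.tail_cons] at hb
        exact (List.nodup_cons.mp hl.2.1).1 (h1 ▸ hb)
    exact chain'_rtg l hchain h1 h2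
  have hroot : ∀ z ∈ (oneChange T u v).verts, (oneChange T u v).Reaches r z := by
    intro z hz
    have hz' : z ∈ T.verts := hz
    refine reaches_of_rtg harcsMem hT.root_mem ?_
    by_cases hvz : T.Reaches v z
    · refine Relation.ReflTransGen.trans ?_ (key2 z hvz)
      refine Relation.ReflTransGen.tail (key1 u hu hnvu) ?_
      rw [Step, mem_oneChange_arcs]
      exact Or.inr rfl
    · exact key1 z hz' hvz
  refine ⟨⟨⟨harcsMem, hT.root_mem, ?_, ?_, hroot⟩, ?_, ?_⟩, hverts⟩
  · rw [hinne r (Ne.symm hvr)]; exact hT.root_indeg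
  · intro z hz hzr
    by_cases hzv : z = v
    · subst hzv
      unfold inDeg
      rw [hinv]
      simp
    · rw [hinne z hzv]; exact hT.indeg_one z hz hzr
  · exact hsub.1
  · intro a ha
    rw [mem_oneChange_arcs] at ha
    rcases ha with ⟨h1, _⟩ | rfl
    · exact hsub.2 h1
    · exact huv

theorem oneChange_leaves (hT : T.IsOutTree r) (hw : (w, v) ∈ T.arcs)
    (hdeg : T.outDeg w = 1) (hune : u ∉ leaves T) (huvn : (u, v) ∉ T.arcs) :
    (leaves T).ncard + 1 ≤ (leaves (oneChange T u v)).ncard := by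
  have hwu : w ≠ u := fun he => huvn (he ▸ hw)
  have houtw : {a ∈ T.arcs | a.1 = w} = {(w, v)} := by
    obtain ⟨a, ha⟩ := Set.ncard_eq_one.mp hdeg
    have hmem : (w, v) ∈ {a ∈ T.arcs | a.1 = w} := ⟨hw, rfl⟩
    rw [ha] at hmem ⊢
    simp only [Set.mem_singleton_iff] at hmem
    rw [hmem]
  have hwleaf : w ∈ leaves (oneChange T u v) := by
    refine ⟨(hT.arcs_mem _ hw).1, ?_⟩
    rw [outDeg_eq_zero_iff]
    ext a
    simp only [Set.mem_setOf_eq, mem_oneChange_arcs, Set.mem_empty_iff_false, iff_false]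
    rintro ⟨⟨h1, h2⟩ | rfl, h3⟩
    · have : a ∈ ({(w, v)} : Set (V × V)) := houtw ▸ (⟨h1, h3⟩ : a ∈ {a ∈ T.arcs | a.1 = w})
      simp only [Set.mem_singleton_iff] at this
      exact h2 (by rw [this])
    · exact hwu h3.symm
  have hsubset : insert w (leaves T) ⊆ leaves (oneChange T u v) := by
    intro z hz
    rcases Set.mem_insert_iff.mp hz with rfl | hz'
    · exact hwleaf
    · have hz0 := hz'.2
      refine ⟨hz'.1, ?_⟩
      rw [outDeg_eq_zero_iff] at hz0 ⊢
      ext a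
      simp only [Set.mem_setOf_eq, mem_oneChange_arcs, Set.mem_empty_iff_false, iff_false]
      rintro ⟨⟨h1, _⟩ | rfl, h3⟩
      · have hmm : a ∈ {a | a ∈ T.arcs ∧ a.1 = z} := ⟨h1, h3⟩
        rw [hz0] at hmm
        exact hmm
      · exact hune (show u ∈ leaves T by rw [show u = z from h3]; exact hz')
  have hnotmem : w ∉ leaves T := fun hwl => by
    rw [mem_leaves_iff] at hwl
    omega
  calc (leaves T).ncard + 1 = (insert w (leaves T)).ncard :=
        (Set.ncard_insert_of_notMem hnotmem (Set.toFinite _)).symm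
    _ ≤ _ := Set.ncard_le_ncard hsubset (Set.toFinite _)

theorem underlying_adj (hne : ∀ a ∈ T.arcs, a.1 ≠ a.2) {a b : {x // x ∈ T.verts}}
    (h : ((a : V), (b : V)) ∈ T.arcs ∨ ((b : V), (a : V)) ∈ T.arcs) :
    (underlying T).Adj a b := by
  rw [underlying, SimpleGraph.fromRel_adj]
  refine ⟨?_, h⟩
  rintro rfl
  rcases h with h | h
  · exact hne _ h rfl
  · exact hne _ h rfl

/-- lift a `ReflTransGen` on `V` to the subtype -/
theorem rtg_subtype {s : Set V} (hr : r ∈ s) (Rel : {x // x ∈ s} → {x // x ∈ s} → Prop)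
    (Q : V → V → Prop)
    (hQR : ∀ (a b : V) (ha : a ∈ s) (hb : b ∈ s), Q a b → Rel ⟨a, ha⟩ ⟨b, hb⟩)
    (hQmem : ∀ a b, Q a b → a ∈ s ∧ b ∈ s)
    {a b : V} (h : Relation.ReflTransGen Q a b) (ha : a ∈ s) (hb : b ∈ s) :
    Relation.ReflTransGen Rel ⟨a, ha⟩ ⟨b, hb⟩ := by
  classical
  have := Relation.ReflTransGen.lift (r := Q) (p := Rel)
    (fun x => if h : x ∈ s then (⟨x, h⟩ : {x // x ∈ s}) else ⟨r, hr⟩) ?_ _ _ h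
  · dsimp only [Function.onFun] at this
    rwa [dif_pos ha, dif_pos hb] at this
  · intro x y hxy
    obtain ⟨hx, hy⟩ := hQmem x y hxy
    dsimp only [Function.onFun]
    rw [dif_pos hx, dif_pos hy]
    exact hQR x y hx hy hxy

/-- a dipath all of whose vertices satisfy `P` yields a `ReflTransGen` of the
decorated adjacency relation in the underlying graph -/
theorem dipath_rtg (hT : T.IsOutTree r) (hne : ∀ a ∈ T.arcs, a.1 ≠ a.2) (P : V → Prop)
    (l : List V) (hl : T.IsDipath l) (hP : ∀ y ∈ l, P y)
    {a b : V} (h1 : l.head? = some a) (h2 : l.getLast? = some b)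
    (ha : a ∈ T.verts) (hb : b ∈ T.verts) :
    Relation.ReflTransGen
      (fun i j : {x // x ∈ T.verts} => (underlying T).Adj i j ∧ P i.val ∧ P j.val)
      ⟨a, ha⟩ ⟨b, hb⟩ := by
  have hchain : l.Chain' (fun x y => ((x, y) ∈ T.arcs ∧ x ∈ T.verts ∧ y ∈ T.verts)
      ∧ P x ∧ P y) := by
    refine chain'_of_chain'_mem l hl.2.2.2 (fun x hx y hy hxy => ?_)
    exact ⟨⟨hxy, (hT.arcs_mem _ hxy).1, (hT.arcs_mem _ hxy).2⟩, hP x hx, hP y hy⟩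
  refine rtg_subtype hT.root_mem _ _ ?_ ?_ (chain'_rtg l hchain h1 h2) ha hb
  · rintro x y hx hy ⟨⟨hxy, _, _⟩, hPx, hPy⟩
    exact ⟨underlying_adj hne (Or.inl hxy), hPx, hPy⟩
  · rintro x y ⟨⟨_, hx, hy⟩, _, _⟩
    exact ⟨hx, hy⟩

theorem underlying_connected (hT : T.IsOutTree r) (hne : ∀ a ∈ T.arcs, a.1 ≠ a.2) :
    (underlying T).Connected := by
  rw [SimpleGraph.connected_iff]
  refine ⟨?_, ⟨⟨r, hT.root_mem⟩⟩⟩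
  have key : ∀ i : {x // x ∈ T.verts}, (underlying T).Reachable ⟨r, hT.root_mem⟩ i := by
    intro i
    obtain ⟨l, hl, h1, h2⟩ := hT.reach_root i.val i.prop
    rw [SimpleGraph.reachable_iff_reflTransGen]
    have := dipath_rtg hT hne (fun _ => True) l hl (by simp) h1 h2 hT.root_mem i.prop
    have h' := Relation.ReflTransGen.mono (fun x y h => h.1) _ _ this
    convert h'
  intro i j
  exact (key i).symm.trans (key j)

theorem underlying_acyclic (hT : T.IsOutTree r) (hne : ∀ a ∈ T.arcs, a.1 ≠ a.2) :
    (underlying T).IsAcyclic := by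
  classical
  intro x c hc
  set d : {x // x ∈ T.verts} → ℕ := fun i => depth T r hT i.val with hd
  have hadj : ∀ i j : {x // x ∈ T.verts}, (underlying T).Adj i j →
      ((i.val, j.val) ∈ T.arcs ∧ d j = d i + 1) ∨
      ((j.val, i.val) ∈ T.arcs ∧ d i = d j + 1) := by
    intro i j hij
    rw [underlying, SimpleGraph.fromRel_adj] at hij
    rcases hij.2 with h | h
    · exact Or.inl ⟨h, depth_arc hT h⟩
    · exact Or.inr ⟨h, depth_arc hT h⟩
  -- pick a vertex of maximal depth on the cycle
  obtain ⟨u, hu_mem, hu_max⟩ := Finset.exists_max_image c.support.toFinset d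
    ⟨x, by rw [List.mem_toFinset]; exact c.start_mem_support⟩
  rw [List.mem_toFinset] at hu_mem
  have hmax : ∀ y ∈ c.support, d y ≤ d u := fun y hy => hu_max y (List.mem_toFinset.mpr hy)
  -- rotate the cycle to start at u
  have hc2 := hc.rotate hu_mem
  set c2 := c.rotate u hu_mem with hc2def
  have hsup : ∀ y ∈ c2.support, d y ≤ d u := by
    intro y hy
    apply hmax
    have := SimpleGraph.Walk.support_rotate c u hu_mem
    rw [SimpleGraph.Walk.support_eq_cons c2] at hy
    rcases List.mem_cons.mp hy with rfl | hy'
    · exact hu_mem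
    · have := this.mem_iff.mp hy'
      rw [SimpleGraph.Walk.support_eq_cons c] at *
      exact List.mem_cons_of_mem _ this
  clear_value c2
  cases c2 with
  | nil => simpa using hc2.three_le_length
  | @cons _ w _ hadj1 q =>
    have hwne : ¬ q.Nil := by
      intro hn
      have := SimpleGraph.Walk.Nil.eq hn
      subst this
      exact (underlying T).irrefl hadj1
    -- the last dart
    rw [← SimpleGraph.Walk.reverse_reverse q] at *
    cases hq : q.reverse with
    | nil =>
      exact hwne (by
        rw [SimpleGraph.Walk.nil_iff_length_eq, ← SimpleGraph.Walk.length_reverse, hq]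
        rfl)
    | @cons _ w2 _ hadj2 q2 =>
      -- hadj1 : Adj u w, hadj2 : Adj u w2
      have hw_mem : w ∈ (SimpleGraph.Walk.cons hadj1 q.reverse.reverse).support := by
        simp [SimpleGraph.Walk.support_cons, SimpleGraph.Walk.start_mem_support]
      have hw2_mem : w2 ∈ (SimpleGraph.Walk.cons hadj1 q.reverse.reverse).support := by
        have : w2 ∈ q.reverse.support := by
          rw [hq]; simp [SimpleGraph.Walk.support_cons, SimpleGraph.Walk.start_mem_support]
        rw [SimpleGraph.Walk.support_reverse] at this
        rw [SimpleGraph.Walk.support_cons]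
        exact List.mem_cons_of_mem _ (by
          rw [SimpleGraph.Walk.support_reverse, SimpleGraph.Walk.support_reverse]
          simpa using List.mem_reverse.mp this)
      have hparent1 : (w.val, u.val) ∈ T.arcs ∧ d u = d w + 1 := by
        rcases hadj u w hadj1 with ⟨h, hdep⟩ | h
        · exfalso; have := hsup w hw_mem; omega
        · exact h
      have hparent2 : (w2.val, u.val) ∈ T.arcs ∧ d u = d w2 + 1 := by
        rcases hadj u w2 hadj2 with ⟨h, hdep⟩ | h
        · exfalso; have := hsup w2 hw2_mem; omega
        · exact h
      have hww : w = w2 := Subtype.ext (parent_eq hT hparent1.1 hparent2.1)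
      -- the first and last edges coincide, contradicting edges_nodup
      subst hww
      have hnd := hc2.edges_nodup
      rw [SimpleGraph.Walk.edges_cons] at hnd
      have hmem : s(u, w) ∈ q.reverse.reverse.edges := by
        rw [SimpleGraph.Walk.edges_reverse, List.mem_reverse, hq]
        rw [SimpleGraph.Walk.edges_cons]
        exact List.mem_cons_self
      exact (List.nodup_cons.mp hnd).1 hmem

theorem mem_bag_parent {V : Type} {D T : DirGraph V} {u v : V} (h : (u, v) ∈ T.arcs) :
    u ∈ bag D T v :=
  Set.mem_union_left _ (Set.mem_union_left _ (Set.mem_union_left _ (Set.mem_union_left _ h)))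

theorem mem_bag_self {V : Type} {D T : DirGraph V} {v : V} : v ∈ bag D T v :=
  Set.mem_union_left _ (Set.mem_union_left _ (Set.mem_union_left _
    (Set.mem_union_right _ (Set.mem_singleton _))))

theorem mem_bag_brSucc {V : Type} {D T : DirGraph V} {z v : V} (h : z ∈ brSucc T) :
    z ∈ bag D T v :=
  Set.mem_union_left _ (Set.mem_union_left _ (Set.mem_union_right _ h))

theorem mem_bag_leaves {V : Type} {D T : DirGraph V} {z v : V} (h : z ∈ leaves T) :
    z ∈ bag D T v :=
  Set.mem_union_left _ (Set.mem_union_right _ h)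

theorem mem_bag_heads {V : Type} {D T : DirGraph V} {z v : V}
    (h : z ∈ heads (backArcs D T v)) : z ∈ bag D T v :=
  Set.mem_union_right _ h

theorem exists_treeDecomp_of_small_width {V : Type} [Fintype V]
    (D T : DirGraph V) (r : V) (k : ℕ) (hD : D.WellFormed)
    (hT : IsOneOptimal T D r)
    (hleaf : (leaves T).ncard ≤ k - 1)
    (hback : ∀ z ∈ D.verts, (heads (backArcs D T z)).ncard ≤ 3 * k - 1) :
    ∃ (ι : Type) (U : SimpleGraph ι) (X : ι → Set V),
      IsTreeDecomp D U X ∧ ∀ i : ι, (X i).ncard - 1 ≤ 6 * k - 5 := by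
  classical
  obtain ⟨hTb, hopt⟩ := hT
  obtain ⟨⟨hTree, hsub⟩, hverts⟩ := hTb
  have hne : ∀ a ∈ T.arcs, a.1 ≠ a.2 := fun a ha => (hD a (hsub.2 ha)).2.2
  obtain ⟨hL1, hBr⟩ := leaf_branch_count hTree
  have memT : ∀ {z : V}, z ∈ D.verts → z ∈ T.verts := fun hz => by rwa [hverts]
  have memD : ∀ {z : V}, z ∈ T.verts → z ∈ D.verts := fun hz => by rwa [← hverts]
  refine ⟨{x // x ∈ T.verts}, underlying T, fun i => bag D T i.val, ⟨?_, ?_, ?_, ?_⟩, ?_⟩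
  -- tree
  · exact ⟨underlying_connected hTree hne, underlying_acyclic hTree hne⟩
  -- mem_bag
  · intro v hv
    exact ⟨⟨v, memT hv⟩, by simp [bag]⟩
  -- arc_bag
  · rintro ⟨u₀, v₀⟩ ha
    have hu₀ : u₀ ∈ T.verts := memT (hD _ ha).1
    have hv₀ : v₀ ∈ T.verts := memT (hD _ ha).2.1
    have huv : u₀ ≠ v₀ := (hD _ ha).2.2
    by_cases huvT : (u₀, v₀) ∈ T.arcs
    · exact ⟨⟨v₀, hv₀⟩, mem_bag_parent huvT, mem_bag_self⟩
    · by_cases hvu : T.Reaches v₀ u₀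
      · refine ⟨⟨u₀, hu₀⟩, mem_bag_self, ?_⟩
        have hb : (u₀, v₀) ∈ backArcs D T u₀ :=
          ⟨ha, ⟨hvu, fun h => huv h.symm⟩, reaches_refl_s9 hu₀⟩
        exact mem_bag_heads ⟨(u₀, v₀), hb, rfl⟩
      · have hv₀r : v₀ ≠ r := by
          rintro rfl
          exact hvu (hTree.reach_root u₀ hu₀)
        obtain ⟨w, hwarc⟩ := exists_parent hTree hv₀ hv₀r
        by_cases hbranch : 2 ≤ T.outDeg w
        · exact ⟨⟨u₀, hu₀⟩, mem_bag_self, mem_bag_brSucc ⟨w, hwarc, hbranch⟩⟩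
        · have hdeg : T.outDeg w = 1 := by
            have := outDeg_ne_zero hwarc
            omega
          have hul : u₀ ∈ leaves T := by
            by_contra hul
            have hbranching := oneChange_isOutBranching hD ⟨⟨hTree, hsub⟩, hverts⟩ ha hv₀r hvu
            have hle := hopt u₀ v₀ ha huvT hv₀r r hbranching
            have := oneChange_leaves hTree hwarc hdeg hul huvT
            omega
          exact ⟨⟨v₀, hv₀⟩, mem_bag_leaves hul, mem_bag_self⟩
  -- bag_connected
  · intro x i j hxi hxj
    have hsymm : Symmetric (fun p q : {x // x ∈ T.verts} =>
        (underlying T).Adj p q ∧ x ∈ bag D T p.val ∧ x ∈ bag D T q.val) :=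
      fun p q h => ⟨h.1.symm, h.2.2, h.2.1⟩
    have key : ∀ (i : {x // x ∈ T.verts}), x ∈ bag D T i.val →
        ∃ hx : x ∈ T.verts, Relation.ReflTransGen
          (fun p q : {x // x ∈ T.verts} =>
            (underlying T).Adj p q ∧ x ∈ bag D T p.val ∧ x ∈ bag D T q.val)
          ⟨x, hx⟩ i := by
      intro i hxbag
      rcases hxbag with (((hp | hv) | hbr) | hlf) | hhd
      · -- x is the in-neighbour of i
        have hx : x ∈ T.verts := (hTree.arcs_mem _ hp).1
        refine ⟨hx, Relation.ReflTransGen.single ?_⟩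
        exact ⟨underlying_adj hne (Or.inl hp), mem_bag_self, mem_bag_parent hp⟩
      · -- x = i
        simp only [Set.mem_singleton_iff] at hv
        subst hv
        exact ⟨i.prop, by rw [Subtype.coe_eta]⟩
      · -- x ∈ brSucc: x is in every bag
        have hx : x ∈ T.verts := (hTree.arcs_mem _ hbr.choose_spec.1).2
        have hall : ∀ y : V, x ∈ bag D T y := fun y => mem_bag_brSucc hbr
        refine ⟨hx, ?_⟩
        obtain ⟨l₁, hl₁, ha₁, hb₁⟩ := hTree.reach_root x hx
        obtain ⟨l₂, hl₂, ha₂, hb₂⟩ := hTree.reach_root i.val i.prop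
        have p₁ := dipath_rtg hTree hne (fun y => x ∈ bag D T y) l₁ hl₁
          (fun y _ => hall y) ha₁ hb₁ hTree.root_mem hx
        have p₂ := dipath_rtg hTree hne (fun y => x ∈ bag D T y) l₂ hl₂
          (fun y _ => hall y) ha₂ hb₂ hTree.root_mem i.prop
        refine Relation.ReflTransGen.trans
          (@Std.Symm.symm _ _ (@Relation.ReflTransGen.stdSymm _ _ ⟨fun a b h => hsymm h⟩) _ _ p₁) ?_
        rw [show (⟨i.val, i.prop⟩ : {x // x ∈ T.verts}) = i from Subtype.coe_eta _ _] at p₂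
        exact p₂
      · -- x ∈ leaves: x is in every bag
        have hx : x ∈ T.verts := hlf.1
        have hall : ∀ y : V, x ∈ bag D T y := fun y => mem_bag_leaves hlf
        refine ⟨hx, ?_⟩
        obtain ⟨l₁, hl₁, ha₁, hb₁⟩ := hTree.reach_root x hx
        obtain ⟨l₂, hl₂, ha₂, hb₂⟩ := hTree.reach_root i.val i.prop
        have p₁ := dipath_rtg hTree hne (fun y => x ∈ bag D T y) l₁ hl₁
          (fun y _ => hall y) ha₁ hb₁ hTree.root_mem hx
        have p₂ := dipath_rtg hTree hne (fun y => x ∈ bag D T y) l₂ hl₂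
          (fun y _ => hall y) ha₂ hb₂ hTree.root_mem i.prop
        refine Relation.ReflTransGen.trans
          (@Std.Symm.symm _ _ (@Relation.ReflTransGen.stdSymm _ _ ⟨fun a b h => hsymm h⟩) _ _ p₁) ?_
        rw [show (⟨i.val, i.prop⟩ : {x // x ∈ T.verts}) = i from Subtype.coe_eta _ _] at p₂
        exact p₂
      · -- x is the head of a back arc for i
        obtain ⟨a, hamem, rfl⟩ := hhd
        obtain ⟨haD, ⟨hreach, hnex⟩, hreach2⟩ := hamem
        have hx : a.2 ∈ T.verts := memT (hD _ haD).2.1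
        refine ⟨hx, ?_⟩
        obtain ⟨l, hl, h1, h2⟩ := hreach
        have hall : ∀ y ∈ l, a.2 ∈ bag D T y := by
          intro y hy
          obtain ⟨hr1, hr2⟩ := reaches_split l hl h1 h2 hy
          by_cases hyx : y = a.2
          · subst hyx; exact mem_bag_self
          · refine mem_bag_heads ⟨a, ⟨haD, ⟨hr1, fun h => hyx h.symm⟩, ?_⟩, rfl⟩
            exact reaches_trans hTree.arcs_mem hr2 hreach2
        have p := dipath_rtg hTree hne (fun y => a.2 ∈ bag D T y) l hl hall h1 h2 hx i.prop
        rw [show (⟨i.val, i.prop⟩ : {x // x ∈ T.verts}) = i from Subtype.coe_eta _ _] at p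
        exact p
    obtain ⟨hx, p₁⟩ := key i hxi
    obtain ⟨hx', p₂⟩ := key j hxj
    exact Relation.ReflTransGen.trans (@Std.Symm.symm _ _ (@Relation.ReflTransGen.stdSymm _ _ ⟨fun a b h => hsymm h⟩) _ _ p₁) p₂
  -- width
  · intro i
    have h1 : {u | (u, i.val) ∈ T.arcs}.ncard ≤ 1 := by
      by_cases hemp : {u | (u, i.val) ∈ T.arcs} = ∅
      · rw [hemp]; simp
      · obtain ⟨p, hp⟩ := Set.nonempty_iff_ne_empty.mpr hemp
        have hsub1 : {u | (u, i.val) ∈ T.arcs} ⊆ {p} := fun q hq =>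
          Set.mem_singleton_iff.mpr (parent_eq hTree hq hp)
        calc _ ≤ ({p} : Set V).ncard := Set.ncard_le_ncard hsub1 (Set.toFinite _)
          _ = 1 := Set.ncard_singleton p
    have e0 : bag D T i.val = {u | (u, i.val) ∈ T.arcs} ∪ {i.val} ∪ brSucc T ∪ leaves T
        ∪ heads (backArcs D T i.val) := rfl
    have e1 := Set.ncard_union_le {u | (u, i.val) ∈ T.arcs} ({i.val} : Set V)
    have e2 := Set.ncard_union_le ({u | (u, i.val) ∈ T.arcs} ∪ {i.val}) (brSucc T)
    have e3 := Set.ncard_union_le ({u | (u, i.val) ∈ T.arcs} ∪ {i.val} ∪ brSucc T) (leaves T)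
    have e4 := Set.ncard_union_le ({u | (u, i.val) ∈ T.arcs} ∪ {i.val} ∪ brSucc T ∪ leaves T)
      (heads (backArcs D T i.val))
    have hs : ({i.val} : Set V).ncard = 1 := Set.ncard_singleton _
    have hbk := hback i.val (memD i.prop)
    show (bag D T i.val).ncard - 1 ≤ 6 * k - 5
    rw [e0]
    omega

end DirGraph
end

section
/- Let T be an out-branching of a digraph D with root r, and let Q be a dipath in D that starts at r. Then the digraph obtained from T by, for each arc (u,v) ∈ A(Q)\A(T), adding the arc (u,v) and deleting the arc of T with head v, is again an out-branching of D, and it contains Q as a subgraph. -/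
namespace DirGraph

variable {V : Type}

private lemma chain'_iff_zip {α : Type} (R : α → α → Prop) :
    ∀ (l : List α), l.Chain' R ↔ ∀ a ∈ l.zip l.tail, R a.1 a.2
  | [] => by simp [List.Chain']
  | [x] => by simp [List.Chain']
  | x :: y :: t => by
    rw [(show List.Chain' R (x :: y :: t) ↔ R x y ∧ List.Chain' R (y :: t) from List.isChain_cons_cons)]
    simp only [List.tail_cons, List.zip_cons_cons, List.mem_cons]
    rw [chain'_iff_zip R (y :: t)]
    constructor
    · rintro ⟨hxy, h⟩ a (rfl | ha)
      · exact hxy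
      · exact h a ha
    · intro h
      exact ⟨h (x, y) (Or.inl rfl), fun a ha => h a (Or.inr ha)⟩

private lemma snd_mem_tail {α : Type} {l : List α} {a : α × α} (h : a ∈ l.zip l.tail) :
    a.2 ∈ l.tail := (List.of_mem_zip h).2

private lemma zip_snd_inj {α : Type} :
    ∀ (l : List α), l.Nodup → ∀ a b : α × α,
      a ∈ l.zip l.tail → b ∈ l.zip l.tail → a.2 = b.2 → a = b
  | [] => by simp
  | [x] => by simp
  | x :: y :: t => by
    intro hnd a b ha hb hab
    have hy : y ∉ t := (List.nodup_cons.mp (List.nodup_cons.mp hnd).2).1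
    simp only [List.tail_cons, List.zip_cons_cons, List.mem_cons] at ha hb
    rcases ha with rfl | ha <;> rcases hb with rfl | hb
    · rfl
    · have := snd_mem_tail (l := y :: t) hb
      rw [← hab] at this
      exact absurd this hy
    · have := snd_mem_tail (l := y :: t) ha
      rw [hab] at this
      exact absurd this hy
    · exact zip_snd_inj (y :: t) (List.nodup_cons.mp hnd).2 a b ha hb hab

private lemma chain_ind {α : Type} {R : α → α → Prop} {P : α → Prop}
    (hstep : ∀ x y, P x → R x y → P y) :
    ∀ (m : List α), m.Chain' R → (∀ u, m.head? = some u → P u) → ∀ v ∈ m, P v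
  | [] => by simp
  | x :: m' => by
    intro hc hh v hv
    have hx : P x := hh x rfl
    rcases hv with _ | hv
    · exact hx
    case tail hv =>
      cases m' with
      | nil => cases hv
      | cons y t =>
        rw [(show List.Chain' R (x :: y :: t) ↔ R x y ∧ List.Chain' R (y :: t) from List.isChain_cons_cons)] at hc
        exact chain_ind hstep (y :: t) hc.2
          (fun u hu => by
            rw [List.head?_cons, Option.some.injEq] at hu
            exact hu ▸ hstep x y hx hc.1)
          v hv

private lemma my_reaches_self (G : DirGraph V) {v : V} (hv : v ∈ G.verts) : G.Reaches v v :=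
  ⟨[v], ⟨by simp, by simp, by simpa using hv, List.isChain_singleton v⟩, rfl, rfl⟩

private lemma my_reaches_step (G : DirGraph V) {r u v : V} (h : G.Reaches r u)
    (ha : (u, v) ∈ G.arcs) (hv : v ∈ G.verts) : G.Reaches r v := by
  obtain ⟨m, ⟨hne, hnd, hmem, hch⟩, hh, hl⟩ := h
  by_cases hvm : v ∈ m
  · obtain ⟨m₁, m₂, rfl⟩ := List.append_of_mem hvm
    refine ⟨m₁ ++ [v], ⟨by simp, ?_, ?_, ?_⟩, ?_, List.getLast?_concat⟩
    · exact hnd.sublist ((List.cons_sublist_cons.mpr (List.nil_sublist m₂)).append_left m₁)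
    · intro x hx
      apply hmem
      rcases List.mem_append.mp hx with h1 | h1
      · exact List.mem_append.mpr (Or.inl h1)
      · simp at h1; subst h1; exact List.mem_append.mpr (Or.inr List.mem_cons_self)
    · exact hch.prefix ⟨m₂, by simp⟩
    · rw [← hh]; cases m₁ <;> simp
  · refine ⟨m ++ [v], ⟨by simp, ?_, ?_, ?_⟩, ?_, List.getLast?_concat⟩
    · exact List.nodup_append'.mpr ⟨hnd, List.nodup_singleton v, by
        intro x hx hx'; simp at hx'; subst hx'; exact hvm hx⟩
    · intro x hx
      rcases List.mem_append.mp hx with h1 | h1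
      · exact hmem x h1
      · simp at h1; subst h1; exact hv
    · refine List.isChain_append.mpr ⟨hch, List.isChain_singleton v, ?_⟩
      intro x hx y hy
      rw [hl] at hx; simp at hx hy; subst hx; subst hy; exact ha
    · rw [← hh]
      cases m with
      | nil => exact absurd rfl hne
      | cons a t => simp

end DirGraph

namespace DirGraph

theorem oneChanges_along_dipath {V : Type} [Fintype V]
    (D T : DirGraph V) (r : V) (l : List V) (hD : D.WellFormed)
    (hT : IsOutBranching T D r)
    (hQ : D.IsDipath l) (hhead : l.head? = some r) :
    IsOutBranching
      (⟨T.verts, {a ∈ T.arcs | a.2 ∉ heads (listArcs l \ T.arcs)} ∪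
        (listArcs l \ T.arcs)⟩ : DirGraph V) D r ∧
    IsSubgraph (⟨{v | v ∈ l}, listArcs l⟩ : DirGraph V)
      (⟨T.verts, {a ∈ T.arcs | a.2 ∉ heads (listArcs l \ T.arcs)} ∪
        (listArcs l \ T.arcs)⟩ : DirGraph V) := by
  obtain ⟨⟨⟨ht_arcs, ht_root, ht_rind, ht_ind1, ht_reach⟩, hTv, hTa⟩, hTveq⟩ := hT
  obtain ⟨hlne, hlnd, hlverts, hlch⟩ := hQ
  set Qd := listArcs l \ T.arcs with hQdDef
  set T' : DirGraph V := ⟨T.verts, {a ∈ T.arcs | a.2 ∉ heads Qd} ∪ Qd⟩ with hT'Def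
  have hzipD : ∀ a ∈ l.zip l.tail, a ∈ D.arcs := (chain'_iff_zip _ l).mp hlch
  have hQdmem : ∀ a, a ∈ Qd → a ∈ l.zip l.tail ∧ a ∉ T.arcs := fun a ha => ⟨ha.1, ha.2⟩
  have hT'subD : T'.arcs ⊆ D.arcs := by
    rintro a (⟨h1, -⟩ | h1)
    · exact hTa h1
    · exact hzipD a (hQdmem a h1).1
  have hQT' : ∀ a ∈ l.zip l.tail, a ∈ T'.arcs := by
    intro a ha
    by_cases h : a ∈ T.arcs
    · refine Or.inl ⟨h, ?_⟩
      rintro ⟨b, hb, hba⟩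
      have hba' : b = a := zip_snd_inj l hlnd b a (hQdmem b hb).1 ha hba
      exact (hQdmem b hb).2 (hba' ▸ h)
    · exact Or.inr ⟨ha, h⟩
  have hsnd_ne_r : ∀ a ∈ l.zip l.tail, a.2 ≠ r := by
    intro a ha hra
    have h2 : a.2 ∈ l.tail := snd_mem_tail ha
    obtain ⟨x, t, hl⟩ : ∃ x t, l = x :: t := by
      cases l with
      | nil => exact absurd rfl hlne
      | cons x t => exact ⟨x, t, rfl⟩
    rw [hl] at h2 hhead hlnd
    have hx : x = r := by simpa using hhead
    rw [hra, ← hx] at h2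
    exact (List.nodup_cons.mp hlnd).1 h2
  have hreachl : ∀ v ∈ l, T'.Reaches r v := by
    refine chain_ind (R := fun u v => (u, v) ∈ T'.arcs)
      (fun x y hx hxy => T'.my_reaches_step hx hxy ?_) l
      ((chain'_iff_zip _ l).mpr hQT')
      (fun u hu => by
        rw [hhead, Option.some.injEq] at hu
        exact hu ▸ T'.my_reaches_self ht_root)
    have := (hD _ (hT'subD hxy)).2.1
    show y ∈ T.verts
    rw [hTveq]; exact this
  refine ⟨⟨⟨⟨?_, ht_root, ?_, ?_, ?_⟩, ?_, hT'subD⟩, hTveq⟩, ?_, hQT'⟩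
  · -- arcs_mem
    intro a ha
    have := hD a (hT'subD ha)
    constructor
    · show a.1 ∈ T.verts; rw [hTveq]; exact this.1
    · show a.2 ∈ T.verts; rw [hTveq]; exact this.2.1
  · -- root_indeg
    have hset : {a ∈ T'.arcs | a.2 = r} = ∅ := by
      ext a
      simp only [Set.mem_setOf_eq, Set.mem_empty_iff_false, iff_false, not_and]
      rintro (⟨h1, -⟩ | h1) h2
      · have he : {a ∈ T.arcs | a.2 = r} = ∅ :=
          (Set.ncard_eq_zero (Set.toFinite _)).mp ht_rind
        have hmem : a ∈ {a | a ∈ T.arcs ∧ a.2 = r} := ⟨h1, h2⟩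
        rw [he] at hmem
        exact hmem
      · exact hsnd_ne_r a (hQdmem a h1).1 h2
    show ({a ∈ T'.arcs | a.2 = r}).ncard = 0
    rw [hset, Set.ncard_empty]
  · -- indeg_one
    intro v hvmem hvne
    by_cases hv : v ∈ heads Qd
    · obtain ⟨b, hbQd, hb2⟩ := hv
      have hset : {a ∈ T'.arcs | a.2 = v} = {b} := by
        ext a
        simp only [Set.mem_setOf_eq, Set.mem_singleton_iff]
        constructor
        · rintro ⟨(⟨h1, hn⟩ | h1), h2⟩
          · exact absurd ⟨b, hbQd, by rw [hb2, h2]⟩ hn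
          · exact zip_snd_inj l hlnd a b (hQdmem a h1).1 (hQdmem b hbQd).1 (by rw [h2, hb2])
        · rintro rfl
          exact ⟨Or.inr hbQd, hb2⟩
      show ({a ∈ T'.arcs | a.2 = v}).ncard = 1
      rw [hset, Set.ncard_singleton]
    · have hset : {a ∈ T'.arcs | a.2 = v} = {a ∈ T.arcs | a.2 = v} := by
        ext a
        simp only [Set.mem_setOf_eq]
        constructor
        · rintro ⟨(⟨h1, -⟩ | h1), h2⟩
          · exact ⟨h1, h2⟩
          · exact absurd ⟨a, h1, h2⟩ hv
        · rintro ⟨h1, h2⟩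
          exact ⟨Or.inl ⟨h1, fun hh => hv (h2 ▸ hh)⟩, h2⟩
      show ({a ∈ T'.arcs | a.2 = v}).ncard = 1
      rw [hset]
      exact ht_ind1 v hvmem hvne
  · -- reach_root
    intro v hvmem
    obtain ⟨m, ⟨hmne, hmnd, hmmem, hmch⟩, hmh, hml⟩ := ht_reach v hvmem
    have hall : ∀ x ∈ m, T'.Reaches r x := by
      refine chain_ind (R := fun x y => (x, y) ∈ T.arcs) ?_ m hmch
        (fun u hu => by
          rw [hmh, Option.some.injEq] at hu
          exact hu ▸ T'.my_reaches_self ht_root)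
      intro x y hx hxy
      by_cases hy : y ∈ heads Qd
      · obtain ⟨b, hb, hb2⟩ := hy
        exact hreachl y (List.mem_of_mem_tail (hb2 ▸ snd_mem_tail (hQdmem b hb).1))
      · exact T'.my_reaches_step hx (Or.inl ⟨hxy, hy⟩) ((ht_arcs _ hxy).2)
    have hvm : v ∈ m := by
      rw [List.getLast?_eq_getLast hmne, Option.some.injEq] at hml
      exact hml ▸ List.getLast_mem hmne
    exact hall v hvm
  · -- verts subset of D
    exact hTveq.subset
  · -- Q verts subset
    intro v hv
    show v ∈ T.verts
    rw [hTveq]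
    exact hlverts v hv


end DirGraph
end
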